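/- arXiv:1607.06604 — 9 statements merged into one kernel-verified Lean document; each statement's English description precedes it below -/
import Mathlib

section
/- Define volP : ℝ → ℝ by volP(t) = 80·(10·cos t + √(100·cos²t − 75))·sin t. Then the function t ↦ volP(t) − (1200·t − 1400·t³) is O(t⁵) as t → 0; that is, volP(t) = 1200·t − 1400·t³ + O(t⁵). -/
open Real Filter Asymptotics

open Finset Complex in
theorem sin_bound5 {x : ℝ} (hx : |x| ≤ 1) :
    |Real.sin x - (x - x ^ 3 / 6)| ≤ |x| ^ 5 * (1 / 100) :=
  calc
    |Real.sin x - (x - x ^ 3 / 6)| = ‖(Complex.sin x - (x - x ^ 3 / 6 : ℝ))‖ := by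
      rw [← Real.norm_eq_abs, ← Complex.norm_real]; simp
    _ = ‖(((Complex.exp (-x * I) - Complex.exp (x * I)) * I -
          (2 * x - x ^ 3 / 3 : ℝ)) / 2)‖ := by
      simp [Complex.sin, sub_div, add_div, neg_div, mul_div_cancel_left₀ _ (two_ne_zero' ℂ),
        div_div, show (3 : ℂ) * 2 = 6 by norm_num]
    _ = ‖(((Complex.exp (-x * I) - ∑ m ∈ range 5, (-x * I) ^ m / m.factorial) -
                (Complex.exp (x * I) - ∑ m ∈ range 5, (x * I) ^ m / m.factorial)) * I / 2)‖ :=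
      (congr_arg (‖·‖)
        (congr_arg (fun x : ℂ => x / 2)
          (by
            simp only [sum_range_succ, neg_mul, pow_succ, pow_zero, mul_one, ofReal_sub, ofReal_mul,
              ofReal_ofNat, ofReal_div, range_zero, sum_empty, Nat.factorial, Nat.cast_one, ne_eq,
              one_ne_zero, not_false_eq_true, div_self, zero_add, div_one, mul_neg, neg_neg,
              Nat.mul_one, Nat.cast_succ, Nat.cast_mul, Nat.cast_ofNat]
            apply Complex.ext <;> simp [div_eq_mul_inv, normSq] <;> ring)))
    _ ≤ ‖((Complex.exp (-x * I) - ∑ m ∈ range 5, (-x * I) ^ m / m.factorial) * I / 2)‖ +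
          ‖(-((Complex.exp (x * I) - ∑ m ∈ range 5, (x * I) ^ m / m.factorial) * I) / 2)‖ := by
      rw [sub_mul, sub_eq_add_neg, add_div]; exact norm_add_le _ _
    _ = ‖(Complex.exp (x * I) - ∑ m ∈ range 5, (x * I) ^ m / m.factorial)‖ / 2 +
          ‖(Complex.exp (-x * I) - ∑ m ∈ range 5, (-x * I) ^ m / m.factorial)‖ / 2 := by
      simp [add_comm, map_div₀]
    _ ≤ ‖(x * I)‖ ^ 5 * (Nat.succ 5 * (Nat.factorial 5 * (5 : ℕ) : ℝ)⁻¹) / 2 +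
          ‖(-x * I)‖ ^ 5 * (Nat.succ 5 * (Nat.factorial 5 * (5 : ℕ) : ℝ)⁻¹) / 2 := by
      gcongr
      · exact Complex.exp_bound (by simpa) (by decide)
      · exact Complex.exp_bound (by simpa) (by decide)
    _ ≤ |x| ^ 5 * (1 / 100) := by norm_num [Nat.factorial]

theorem stmt_3 (volP : ℝ → ℝ)
    (hvolP : ∀ t : ℝ, volP t =
        80 * (10 * cos t + Real.sqrt (100 * cos t ^ 2 - 75)) * sin t) :
    (fun t : ℝ => volP t - (1200 * t - 1400 * t ^ 3)) =O[nhds 0] fun t : ℝ => t ^ 5 := by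
  set l : Filter ℝ := nhds 0
  have habs1 : ∀ᶠ t : ℝ in l, |t| ≤ 1 := by
    have : ∀ᶠ t : ℝ in l, t ∈ Set.Ioo (-1 : ℝ) 1 :=
      Ioo_mem_nhds (by norm_num) (by norm_num)
    filter_upwards [this] with t ht
    rw [abs_le]; exact ⟨ht.1.le, ht.2.le⟩
  -- sin expansions
  have hsin5 : (fun t : ℝ => Real.sin t - (t - t ^ 3 / 6)) =O[l] fun t => t ^ 5 := by
    rw [isBigO_iff]
    refine ⟨1 / 100, ?_⟩
    filter_upwards [habs1] with t ht
    rw [Real.norm_eq_abs, Real.norm_eq_abs, abs_pow]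
    linarith [sin_bound5 ht]
  have h53 : (fun t : ℝ => t ^ 5) =O[l] fun t => t ^ 3 :=
    (isLittleO_pow_pow (by norm_num : 3 < 5)).isBigO
  have hsin3 : (fun t : ℝ => Real.sin t - t) =O[l] fun t => t ^ 3 := by
    have h2 : (fun t : ℝ => t ^ 3 / 6) =O[l] fun t => t ^ 3 :=
      (isBigO_refl _ _).const_mul_left 6⁻¹ |>.congr_left fun t => by ring
    have := (hsin5.trans h53).sub h2
    exact this.congr_left fun t => by ring
  have hsin1 : (fun t : ℝ => Real.sin t) =O[l] fun t => t := by
    rw [isBigO_iff]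
    exact ⟨1, .of_forall fun t => by simpa using Real.abs_sin_le_abs⟩
  have hcos : (fun t : ℝ => Real.cos t - (1 - t ^ 2 / 2)) =O[l] fun t => t ^ 4 := by
    rw [isBigO_iff]
    refine ⟨5 / 96, ?_⟩
    filter_upwards [habs1] with t ht
    rw [Real.norm_eq_abs, Real.norm_eq_abs, abs_pow]
    linarith [Real.cos_bound ht]
  -- the sqrt term
  set r : ℝ → ℝ := fun t => Real.sqrt (100 * Real.cos t ^ 2 - 75) with hr
  have hcont : Tendsto (fun t : ℝ => 100 * Real.cos t ^ 2 - 75) l (nhds 25) := by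
    have h : ContinuousAt (fun t : ℝ => 100 * Real.cos t ^ 2 - 75) 0 := by fun_prop
    simp only [ContinuousAt] at h
    norm_num at h
    exact h
  have hDten : Tendsto (fun t : ℝ => r t + (5 - 10 * t ^ 2)) l (nhds 10) := by
    have h1 : Tendsto r l (nhds 5) := by
      have := (Real.continuous_sqrt.tendsto 25).comp hcont
      simpa [hr, Function.comp_def, show Real.sqrt 25 = 5 by
        rw [show (25 : ℝ) = 5 ^ 2 by norm_num, Real.sqrt_sq]; norm_num] using this
    have h2 : Tendsto (fun t : ℝ => 5 - 10 * t ^ 2) l (nhds 5) := by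
      have h : ContinuousAt (fun t : ℝ => 5 - 10 * t ^ 2) 0 := by fun_prop
      simp only [ContinuousAt] at h
      norm_num at h
      exact h
    have := h1.add h2
    norm_num at this
    exact this
  have hDinv : (fun t : ℝ => (r t + (5 - 10 * t ^ 2))⁻¹) =O[l] fun _ => (1 : ℝ) :=
    (hDten.inv₀ (by norm_num)).isBigO_one ℝ
  have hpos : ∀ᶠ t : ℝ in l, 0 < 100 * Real.cos t ^ 2 - 75 :=
    hcont.eventually (eventually_gt_nhds (by norm_num))
  have hDpos : ∀ᶠ t : ℝ in l, 0 < r t + (5 - 10 * t ^ 2) :=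
    hDten.eventually (eventually_gt_nhds (by norm_num))
  have hN : (fun t : ℝ => 100 * ((t - Real.sin t) * (t + Real.sin t)) - 100 * t ^ 4)
      =O[l] fun t => t ^ 4 := by
    have ha : (fun t : ℝ => t - Real.sin t) =O[l] fun t => t ^ 3 :=
      hsin3.neg_left.congr_left fun t => by ring
    have hb : (fun t : ℝ => t + Real.sin t) =O[l] fun t => t :=
      (isBigO_refl (fun t : ℝ => t) l).add hsin1
    have h1 := (((ha.mul hb).congr_right fun t => by ring).const_mul_left 100 :
      (fun t : ℝ => 100 * ((t - Real.sin t) * (t + Real.sin t))) =O[l] fun t => t ^ 4)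
    have h2 : (fun t : ℝ => 100 * t ^ 4) =O[l] fun t => t ^ 4 :=
      (isBigO_refl _ _).const_mul_left 100
    exact h1.sub h2
  have hRq : (fun t : ℝ => (100 * ((t - Real.sin t) * (t + Real.sin t)) - 100 * t ^ 4) *
      (r t + (5 - 10 * t ^ 2))⁻¹) =O[l] fun t => t ^ 4 := by
    have := hN.mul hDinv
    simpa using this
  have hR : (fun t : ℝ => r t - (5 - 10 * t ^ 2)) =O[l] fun t => t ^ 4 := by
    refine hRq.congr' ?_ (EventuallyEq.refl _ _)
    filter_upwards [hpos, hDpos] with t h1 h2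
    have hrsq : r t ^ 2 = 100 * Real.cos t ^ 2 - 75 := Real.sq_sqrt h1.le
    have hD : r t + (5 - 10 * t ^ 2) ≠ 0 := ne_of_gt h2
    have hkey : (r t - (5 - 10 * t ^ 2)) * (r t + (5 - 10 * t ^ 2)) =
        100 * ((t - Real.sin t) * (t + Real.sin t)) - 100 * t ^ 4 := by
      have hsc : Real.sin t ^ 2 + Real.cos t ^ 2 = 1 := Real.sin_sq_add_cos_sq t
      nlinarith [hrsq, hsc]
    rw [← div_eq_mul_inv, div_eq_iff hD]
    linarith [hkey]
  -- E = 10 cos + r - (15 - 15 t^2) = O(t^4)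
  have hE : (fun t : ℝ => 10 * Real.cos t + r t - (15 - 15 * t ^ 2)) =O[l] fun t => t ^ 4 := by
    have := (hcos.const_mul_left 10).add hR
    exact this.congr_left fun t => by ring
  -- assemble
  have term1 : (fun t : ℝ => 80 * (10 * Real.cos t + r t - (15 - 15 * t ^ 2)) * Real.sin t)
      =O[l] fun t => t ^ 5 := by
    exact ((hE.const_mul_left 80).mul hsin1).congr_right fun t => by ring
  have term3 : (fun t : ℝ => 1200 * t ^ 2 * (Real.sin t - t)) =O[l] fun t => t ^ 5 := by
    exact (((isBigO_refl (fun t : ℝ => t ^ 2) l).const_mul_left 1200).mul hsin3).congr_right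
      fun t => by ring
  have total := (term1.add (hsin5.const_mul_left 1200)).sub term3
  refine total.congr_left fun t => ?_
  rw [hvolP t]
  ring
end

section
/- Define f : ℝ → ℝ by f(t) = √(69 + 200·cos²t + 20·cos t·√(100·cos²t − 75)) and volQ : ℝ → ℝ by volQ(t) = (5/3)·√(438·f(t)² − f(t)⁴ − 4761). Then the function t ↦ volQ(t) − (50·√23 + (3750/√23)·t²) is O(t⁴) as t → 0; that is, volQ(t) = 50·√23 + (3750/√23)·t² + O(t⁴). -/
open Real Filter Asymptotics

lemma quad_taylor {V : ℝ → ℝ} {a : ℝ} (hV : ContDiffAt ℝ 2 V a) :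
    (fun y => V y - V a - deriv V a * (y - a)) =O[nhds a] fun y => (y - a) ^ 2 := by
  obtain ⟨u, hu, hVu⟩ := hV.contDiffOn le_rfl (by simp)
  obtain ⟨ε, εpos, hball⟩ := Metric.mem_nhds_iff.1 hu
  have hVball : ContDiffOn ℝ 2 V (Metric.ball a ε) := hVu.mono hball
  have hderiv : ContDiffOn ℝ 1 (deriv V) (Metric.ball a ε) :=
    hVball.deriv_of_isOpen Metric.isOpen_ball (by norm_num)
  have hd : DifferentiableAt ℝ (deriv V) a :=
    (hderiv.contDiffAt (Metric.isOpen_ball.mem_nhds (Metric.mem_ball_self εpos))).differentiableAt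
      one_ne_zero
  have hO : (fun y => deriv V y - deriv V a) =O[nhds a] fun y => y - a :=
    hd.hasDerivAt.hasFDerivAt.isBigO_sub
  obtain ⟨C, hC⟩ := isBigO_iff.1 hO
  obtain ⟨δ, δpos, hδ⟩ := Metric.eventually_nhds_iff.1 hC
  rw [isBigO_iff]
  refine ⟨|C|, ?_⟩
  have hr : (0:ℝ) < min ε δ := lt_min εpos δpos
  filter_upwards [Metric.ball_mem_nhds a hr] with y hy
  have hylt : dist y a < min ε δ := by simpa [Metric.mem_ball] using hy
  have hsub : Metric.closedBall a (dist y a) ⊆ Metric.ball a (min ε δ) := fun z hz => by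
    simp only [Metric.mem_closedBall] at hz
    exact Metric.mem_ball.2 (lt_of_le_of_lt hz hylt)
  have key : ‖(V y - deriv V a * y) - (V a - deriv V a * a)‖ ≤ (|C| * ‖y - a‖) * ‖y - a‖ := by
    apply Convex.norm_image_sub_le_of_norm_hasDerivWithin_le
      (f := fun z => V z - deriv V a * z) (f' := fun z => deriv V z - deriv V a)
      (s := Metric.closedBall a (dist y a))
    · intro z hz
      have hz1 : z ∈ Metric.ball a ε :=
        Metric.ball_subset_ball (min_le_left ε δ) (hsub hz)
      have hVz : HasDerivAt V (deriv V z) z :=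
        ((hVball.differentiableOn (by norm_num)).differentiableAt
          (Metric.isOpen_ball.mem_nhds hz1)).hasDerivAt
      have hlin : HasDerivAt (fun w : ℝ => deriv V a * w) (deriv V a) z := by
        simpa using (hasDerivAt_id z).const_mul (deriv V a)
      exact (hVz.sub hlin).hasDerivWithinAt
    · intro z hz
      have hz2 : dist z a < δ :=
        lt_of_lt_of_le (Metric.mem_ball.1 (hsub hz)) (min_le_right ε δ)
      have h1 : ‖deriv V z - deriv V a‖ ≤ C * ‖z - a‖ := hδ hz2
      have h2 : ‖z - a‖ ≤ ‖y - a‖ := by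
        have := Metric.mem_closedBall.1 hz
        rw [Real.dist_eq] at this
        simpa [Real.norm_eq_abs, Real.dist_eq] using this
      calc ‖deriv V z - deriv V a‖ ≤ C * ‖z - a‖ := h1
        _ ≤ |C| * ‖z - a‖ := mul_le_mul_of_nonneg_right (le_abs_self C) (norm_nonneg _)
        _ ≤ |C| * ‖y - a‖ := mul_le_mul_of_nonneg_left h2 (abs_nonneg C)
    · exact convex_closedBall a (dist y a)
    · exact Metric.mem_closedBall_self dist_nonneg
    · exact Metric.mem_closedBall.2 le_rfl
  calc ‖V y - V a - deriv V a * (y - a)‖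
      = ‖(V y - deriv V a * y) - (V a - deriv V a * a)‖ := by ring_nf
    _ ≤ (|C| * ‖y - a‖) * ‖y - a‖ := key
    _ = |C| * ‖(y - a) ^ 2‖ := by rw [pow_two, norm_mul]; ring

noncomputable def uuF : ℝ → ℝ := fun y => 69 + 200 * y ^ 2 + 20 * y * Real.sqrt (100 * y ^ 2 - 75)

noncomputable def VVF : ℝ → ℝ := fun y => 5 / 3 * Real.sqrt (438 * uuF y - uuF y ^ 2 - 4761)

lemma sqrt25 : Real.sqrt (100 * (1:ℝ) ^ 2 - 75) = 5 := by
  rw [show (100 * (1:ℝ) ^ 2 - 75) = 5 ^ 2 by norm_num]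
  exact Real.sqrt_sq (by norm_num)

lemma uu1 : uuF 1 = 369 := by
  simp only [uuF, sqrt25]; norm_num

lemma E1 : 438 * uuF 1 - uuF 1 ^ 2 - 4761 = 20700 := by rw [uu1]; norm_num

lemma sqrt20700 : Real.sqrt 20700 = 30 * Real.sqrt 23 := by
  rw [show (20700:ℝ) = 30 ^ 2 * 23 by norm_num, Real.sqrt_mul (by positivity),
    Real.sqrt_sq (by norm_num)]

lemma VV1 : VVF 1 = 50 * Real.sqrt 23 := by
  show 5 / 3 * Real.sqrt (438 * uuF 1 - uuF 1 ^ 2 - 4761) = 50 * Real.sqrt 23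
  rw [E1, sqrt20700]; ring

lemma hs' : HasDerivAt (fun y : ℝ => Real.sqrt (100 * y ^ 2 - 75)) 20 1 := by
  have hp : HasDerivAt (fun y : ℝ => 100 * y ^ 2 - 75) 200 1 := by
    have := ((hasDerivAt_pow 2 (1:ℝ)).const_mul 100).sub_const 75
    norm_num at this ⊢; exact this
  have h := hp.sqrt (by norm_num : (100 * (1:ℝ) ^ 2 - 75) ≠ 0)
  convert h using 1
  rw [sqrt25]; norm_num

lemma hu' : HasDerivAt uuF 900 1 := by
  have h1 : HasDerivAt (fun y : ℝ => 69 + 200 * y ^ 2) 400 1 := by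
    have := ((hasDerivAt_pow 2 (1:ℝ)).const_mul 200).const_add 69
    norm_num at this ⊢; exact this
  have hlin : HasDerivAt (fun y : ℝ => 20 * y) 20 1 := by
    simpa using (hasDerivAt_id (1:ℝ)).const_mul 20
  have hprod := hlin.mul hs'
  have h := h1.add hprod
  refine h.congr_deriv ?_
  simp only [sqrt25]; norm_num

lemma hE' : HasDerivAt (fun y : ℝ => 438 * uuF y - uuF y ^ 2 - 4761) (-270000) 1 := by
  have h := ((hu'.const_mul 438).sub (hu'.pow 2)).sub_const 4761
  refine h.congr_deriv ?_
  rw [uu1]; norm_num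

lemma hV' : HasDerivAt VVF (-7500 / Real.sqrt 23) 1 := by
  have hne : 438 * uuF 1 - uuF 1 ^ 2 - 4761 ≠ 0 := by rw [E1]; norm_num
  have h := (hE'.sqrt hne).const_mul (5 / 3 : ℝ)
  have h23 : Real.sqrt 23 > 0 := Real.sqrt_pos.2 (by norm_num)
  refine h.congr_deriv ?_
  rw [E1, sqrt20700]
  field_simp
  ring

lemma hV2 : ContDiffAt ℝ 2 VVF 1 := by
  have hpoly : ContDiffAt ℝ 2 (fun y : ℝ => 100 * y ^ 2 - 75) 1 := by fun_prop
  have hcs : ContDiffAt ℝ 2 (fun y : ℝ => Real.sqrt (100 * y ^ 2 - 75)) 1 := by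
    have := (Real.contDiffAt_sqrt (x := 100 * (1:ℝ) ^ 2 - 75) (by norm_num)).comp 1 hpoly
    exact this
  have hpoly2 : ContDiffAt ℝ 2 (fun y : ℝ => 69 + 200 * y ^ 2) 1 := by fun_prop
  have hpoly3 : ContDiffAt ℝ 2 (fun y : ℝ => 20 * y) 1 := by fun_prop
  have hu2 : ContDiffAt ℝ 2 uuF 1 := hpoly2.add (hpoly3.mul hcs)
  have hE2 : ContDiffAt ℝ 2 (fun y : ℝ => 438 * uuF y - uuF y ^ 2 - 4761) 1 :=
    ((contDiffAt_const.mul hu2).sub (hu2.pow 2)).sub contDiffAt_const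
  have hne : (fun y : ℝ => 438 * uuF y - uuF y ^ 2 - 4761) 1 ≠ 0 := by
    show 438 * uuF 1 - uuF 1 ^ 2 - 4761 ≠ 0
    rw [E1]; norm_num
  have := (Real.contDiffAt_sqrt hne).comp 1 hE2
  exact contDiffAt_const.mul this

theorem stmt_9 (f volQ : ℝ → ℝ)
    (hf : ∀ t : ℝ, f t = Real.sqrt (69 + 200 * cos t ^ 2 +
        20 * cos t * Real.sqrt (100 * cos t ^ 2 - 75)))
    (hvolQ : ∀ t : ℝ, volQ t =
        (5 / 3) * Real.sqrt (438 * f t ^ 2 - f t ^ 4 - 4761)) :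
    (fun t : ℝ => volQ t - (50 * Real.sqrt 23 + 3750 / Real.sqrt 23 * t ^ 2))
      =O[nhds 0] fun t : ℝ => t ^ 4 := by
  have hderiv_eq : deriv VVF 1 = -7500 / Real.sqrt 23 := hV'.deriv
  have key := quad_taylor hV2
  have hcos : Filter.Tendsto (fun t : ℝ => Real.cos t) (nhds 0) (nhds 1) := by
    simpa using Real.continuous_cos.tendsto 0
  have key2 : (fun t : ℝ => VVF (Real.cos t) - VVF 1 - deriv VVF 1 * (Real.cos t - 1))
      =O[nhds 0] fun t : ℝ => (Real.cos t - 1) ^ 2 := key.comp_tendsto hcos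
  have habs1 : ∀ᶠ t : ℝ in nhds 0, |t| ≤ 1 := by
    filter_upwards [Metric.ball_mem_nhds (0:ℝ) one_pos] with t ht
    rw [Metric.mem_ball, Real.dist_eq, sub_zero] at ht
    exact ht.le
  have h2 : (fun t : ℝ => Real.cos t - 1) =O[nhds 0] fun t : ℝ => t ^ 2 := by
    rw [isBigO_iff]
    refine ⟨1, ?_⟩
    filter_upwards [habs1] with t ht
    have hb := Real.cos_bound ht
    rw [Real.norm_eq_abs, Real.norm_eq_abs]
    have e : Real.cos t - 1 = (Real.cos t - (1 - t ^ 2 / 2)) + (-(t ^ 2 / 2)) := by ring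
    rw [e]
    refine le_trans (abs_add_le _ _) ?_
    have h5 : |t| ^ 2 ≤ 1 := by nlinarith [abs_nonneg t]
    have h4 : |t| ^ 4 ≤ |t| ^ 2 := by nlinarith [abs_nonneg t, sq_nonneg (|t|^2)]
    have hsq : |t| ^ 2 = t ^ 2 := sq_abs t
    have h6 : |-(t ^ 2 / 2)| = t ^ 2 / 2 := by
      rw [abs_neg, abs_of_nonneg (by positivity)]
    have h7 : |t ^ 2| = t ^ 2 := abs_of_nonneg (by positivity)
    nlinarith [hb]
  have hsq4 : (fun t : ℝ => (Real.cos t - 1) ^ 2) =O[nhds 0] fun t : ℝ => t ^ 4 := by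
    have e1 : (fun t : ℝ => (Real.cos t - 1) ^ 2)
        = fun t : ℝ => (Real.cos t - 1) * (Real.cos t - 1) := funext fun t => sq (Real.cos t - 1)
    have e2 : (fun t : ℝ => t ^ 4) = fun t : ℝ => t ^ 2 * t ^ 2 := funext fun t => by ring
    rw [e1, e2]
    exact h2.mul h2
  have h3 : (fun t : ℝ => Real.cos t - 1 + t ^ 2 / 2) =O[nhds 0] fun t : ℝ => t ^ 4 := by
    rw [isBigO_iff]
    refine ⟨5 / 96, ?_⟩
    filter_upwards [habs1] with t ht
    have hb := Real.cos_bound ht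
    rw [Real.norm_eq_abs, Real.norm_eq_abs]
    have e : Real.cos t - 1 + t ^ 2 / 2 = Real.cos t - (1 - t ^ 2 / 2) := by ring
    rw [e]
    calc |Real.cos t - (1 - t ^ 2 / 2)| ≤ |t| ^ 4 * (5 / 96) := hb
      _ = 5 / 96 * |t ^ 4| := by rw [← abs_pow]; ring
  have big1 : (fun t : ℝ => VVF (Real.cos t) - VVF 1 - deriv VVF 1 * (Real.cos t - 1))
      =O[nhds 0] fun t : ℝ => t ^ 4 := key2.trans hsq4
  have big2 : (fun t : ℝ => deriv VVF 1 * (Real.cos t - 1 + t ^ 2 / 2))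
      =O[nhds 0] fun t : ℝ => t ^ 4 := h3.const_mul_left _
  have big := big1.add big2
  have h23 : Real.sqrt 23 > 0 := Real.sqrt_pos.2 (by norm_num)
  have heq : (fun t : ℝ => volQ t - (50 * Real.sqrt 23 + 3750 / Real.sqrt 23 * t ^ 2))
      =ᶠ[nhds 0] fun t : ℝ =>
        (VVF (Real.cos t) - VVF 1 - deriv VVF 1 * (Real.cos t - 1))
          + deriv VVF 1 * (Real.cos t - 1 + t ^ 2 / 2) := by
    filter_upwards [habs1] with t ht
    have hc0 : 0 ≤ Real.cos t := by
      have hpi := Real.pi_gt_three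
      have hab := abs_le.1 ht
      exact Real.cos_nonneg_of_mem_Icc ⟨by linarith [hab.1], by linarith [hab.2]⟩
    have hsn := Real.sqrt_nonneg (100 * Real.cos t ^ 2 - 75)
    have hinner : 0 ≤ 69 + 200 * Real.cos t ^ 2 +
        20 * Real.cos t * Real.sqrt (100 * Real.cos t ^ 2 - 75) := by
      have h20 : 0 ≤ 20 * Real.cos t * Real.sqrt (100 * Real.cos t ^ 2 - 75) :=
        mul_nonneg (mul_nonneg (by norm_num) hc0) hsn
      nlinarith [sq_nonneg (Real.cos t)]
    have hft2 : f t ^ 2 = uuF (Real.cos t) := by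
      rw [hf t]
      exact Real.sq_sqrt hinner
    have hft4 : f t ^ 4 = uuF (Real.cos t) ^ 2 := by
      rw [show (4 : ℕ) = 2 * 2 from rfl, pow_mul, hft2]
    have hvv : volQ t = VVF (Real.cos t) := by
      rw [hvolQ t, hft2, hft4]; rfl
    rw [hvv, VV1, hderiv_eq]
    field_simp
    ring
  exact heq.trans_isBigO big
end

section
/- Define volP : ℝ → ℝ by volP(t) = 80·(10·cos t + √(100·cos²t − 75))·sin t, f : ℝ → ℝ by f(t) = √(69 + 200·cos²t + 20·cos t·√(100·cos²t − 75)), and volQ : ℝ → ℝ by volQ(t) = (5/3)·√(438·f(t)² − f(t)⁴ − 4761). Then the ratio volQ(t)/volP(t) tends to +∞ as t tends to 0 from the right. In particular, for every constant c > 0 there exists t with 0 < t < π/6 such that 12 − 5·√3 < f(t) < 12 + 5·√3, volP(t) > 0, and volQ(t) > c·volP(t). -/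
open Real Filter

theorem stmt_11 (volP f volQ : ℝ → ℝ)
    (hvolP : ∀ t : ℝ, volP t =
        80 * (10 * cos t + Real.sqrt (100 * cos t ^ 2 - 75)) * sin t)
    (hf : ∀ t : ℝ, f t = Real.sqrt (69 + 200 * cos t ^ 2 +
        20 * cos t * Real.sqrt (100 * cos t ^ 2 - 75)))
    (hvolQ : ∀ t : ℝ, volQ t =
        (5 / 3) * Real.sqrt (438 * f t ^ 2 - f t ^ 4 - 4761)) :
    Tendsto (fun t : ℝ => volQ t / volP t) (nhdsWithin 0 (Set.Ioi 0)) atTop ∧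
    ∀ c : ℝ, 0 < c → ∃ t : ℝ, 0 < t ∧ t < π / 6 ∧
      (12 - 5 * Real.sqrt 3 < f t ∧ f t < 12 + 5 * Real.sqrt 3) ∧
      volP t > 0 ∧ volQ t > c * volP t := by
  obtain rfl : f = _ := funext hf
  obtain rfl : volP = _ := funext hvolP
  obtain rfl : volQ = _ := funext hvolQ
  simp only
  -- continuity
  have hcf : Continuous fun t : ℝ => Real.sqrt (69 + 200 * cos t ^ 2 +
      20 * cos t * Real.sqrt (100 * cos t ^ 2 - 75)) := by fun_prop
  have hcQ : Continuous fun t : ℝ => (5 / 3 : ℝ) * Real.sqrt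
      (438 * (Real.sqrt (69 + 200 * cos t ^ 2 +
        20 * cos t * Real.sqrt (100 * cos t ^ 2 - 75))) ^ 2 -
       (Real.sqrt (69 + 200 * cos t ^ 2 +
        20 * cos t * Real.sqrt (100 * cos t ^ 2 - 75))) ^ 4 - 4761) := by fun_prop
  have hcP : Continuous fun t : ℝ =>
      80 * (10 * cos t + Real.sqrt (100 * cos t ^ 2 - 75)) * sin t := by fun_prop
  have h25 : Real.sqrt (100 * cos (0:ℝ) ^ 2 - 75) = 5 := by
    rw [Real.cos_zero]
    rw [show (100 * (1:ℝ) ^ 2 - 75) = 5 ^ 2 by norm_num]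
    exact Real.sqrt_sq (by norm_num)
  have hf0 : Real.sqrt (69 + 200 * cos (0:ℝ) ^ 2 +
      20 * cos (0:ℝ) * Real.sqrt (100 * cos (0:ℝ) ^ 2 - 75)) = Real.sqrt 369 := by
    rw [h25, Real.cos_zero]; norm_num
  have hf0sq : (Real.sqrt 369) ^ 2 = 369 := Real.sq_sqrt (by norm_num)
  have hQ0 : (5 / 3 : ℝ) * Real.sqrt
      (438 * (Real.sqrt (69 + 200 * cos (0:ℝ) ^ 2 +
        20 * cos (0:ℝ) * Real.sqrt (100 * cos (0:ℝ) ^ 2 - 75))) ^ 2 -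
       (Real.sqrt (69 + 200 * cos (0:ℝ) ^ 2 +
        20 * cos (0:ℝ) * Real.sqrt (100 * cos (0:ℝ) ^ 2 - 75))) ^ 4 - 4761)
      = (5 / 3) * Real.sqrt 20700 := by
    rw [hf0]
    congr 1
    have h4 : (Real.sqrt 369) ^ 4 = 369 ^ 2 := by
      rw [show (4:ℕ) = 2 * 2 by norm_num, pow_mul, hf0sq]
    rw [h4, hf0sq]; norm_num
  have hQ0pos : (0:ℝ) < (5 / 3) * Real.sqrt 20700 := by
    have := Real.sqrt_pos.mpr (show (0:ℝ) < 20700 by norm_num)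
    linarith
  have htQ : Tendsto (fun t : ℝ => (5 / 3 : ℝ) * Real.sqrt
      (438 * (Real.sqrt (69 + 200 * cos t ^ 2 +
        20 * cos t * Real.sqrt (100 * cos t ^ 2 - 75))) ^ 2 -
       (Real.sqrt (69 + 200 * cos t ^ 2 +
        20 * cos t * Real.sqrt (100 * cos t ^ 2 - 75))) ^ 4 - 4761))
      (nhdsWithin 0 (Set.Ioi 0)) (nhds ((5 / 3) * Real.sqrt 20700)) := by
    have := (hcQ.tendsto 0).mono_left (nhdsWithin_le_nhds (s := Set.Ioi (0:ℝ)))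
    rwa [hQ0] at this
  have hP0val : 80 * (10 * cos (0:ℝ) +
      Real.sqrt (100 * cos (0:ℝ) ^ 2 - 75)) * sin (0:ℝ) = 0 := by simp
  have hevsmall : ∀ᶠ t : ℝ in nhdsWithin 0 (Set.Ioi 0), t ∈ Set.Ioo (0:ℝ) 1 := by
    have h1 : ∀ᶠ t : ℝ in nhdsWithin 0 (Set.Ioi 0), t < 1 :=
      Filter.Eventually.filter_mono nhdsWithin_le_nhds (eventually_lt_nhds (by norm_num))
    have h2 : ∀ᶠ t : ℝ in nhdsWithin 0 (Set.Ioi 0), t ∈ Set.Ioi (0:ℝ) :=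
      eventually_mem_nhdsWithin
    filter_upwards [h1, h2] with t ht1 ht2
    exact ⟨ht2, ht1⟩
  have hevgpos : ∀ᶠ t : ℝ in nhdsWithin 0 (Set.Ioi 0),
      0 < 80 * (10 * cos t + Real.sqrt (100 * cos t ^ 2 - 75)) := by
    have hcg : Continuous fun t : ℝ =>
        80 * (10 * cos t + Real.sqrt (100 * cos t ^ 2 - 75)) := by fun_prop
    have ht := (hcg.tendsto 0).mono_left (nhdsWithin_le_nhds (s := Set.Ioi (0:ℝ)))
    have hg0 : 80 * (10 * cos (0:ℝ) + Real.sqrt (100 * cos (0:ℝ) ^ 2 - 75)) = 1200 := by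
      rw [h25, Real.cos_zero]; norm_num
    rw [hg0] at ht
    exact ht.eventually (eventually_gt_nhds (by norm_num))
  have hevPpos : ∀ᶠ t : ℝ in nhdsWithin 0 (Set.Ioi 0),
      0 < 80 * (10 * cos t + Real.sqrt (100 * cos t ^ 2 - 75)) * sin t := by
    filter_upwards [hevsmall, hevgpos] with t ht hg
    have hsin : 0 < sin t :=
      Real.sin_pos_of_pos_of_lt_pi ht.1 (lt_trans ht.2 (by linarith [Real.pi_gt_three]))
    positivity
  have htP : Tendsto (fun t : ℝ =>
      80 * (10 * cos t + Real.sqrt (100 * cos t ^ 2 - 75)) * sin t)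
      (nhdsWithin 0 (Set.Ioi 0)) (nhdsWithin 0 (Set.Ioi 0)) := by
    apply tendsto_nhdsWithin_of_tendsto_nhds_of_eventually_within
    · have := (hcP.tendsto 0).mono_left (nhdsWithin_le_nhds (s := Set.Ioi (0:ℝ)))
      rwa [hP0val] at this
    · exact hevPpos
  have hmain : Tendsto (fun t : ℝ =>
      ((5 / 3 : ℝ) * Real.sqrt
      (438 * (Real.sqrt (69 + 200 * cos t ^ 2 +
        20 * cos t * Real.sqrt (100 * cos t ^ 2 - 75))) ^ 2 -
       (Real.sqrt (69 + 200 * cos t ^ 2 +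
        20 * cos t * Real.sqrt (100 * cos t ^ 2 - 75))) ^ 4 - 4761)) /
      (80 * (10 * cos t + Real.sqrt (100 * cos t ^ 2 - 75)) * sin t))
      (nhdsWithin 0 (Set.Ioi 0)) atTop := by
    simp only [div_eq_mul_inv]
    exact htQ.pos_mul_atTop hQ0pos (tendsto_inv_nhdsGT_zero.comp htP)
  refine ⟨hmain, ?_⟩
  intro c hc
  have hevf : ∀ᶠ t : ℝ in nhdsWithin 0 (Set.Ioi 0),
      12 - 5 * Real.sqrt 3 < Real.sqrt (69 + 200 * cos t ^ 2 +
        20 * cos t * Real.sqrt (100 * cos t ^ 2 - 75)) ∧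
      Real.sqrt (69 + 200 * cos t ^ 2 +
        20 * cos t * Real.sqrt (100 * cos t ^ 2 - 75)) < 12 + 5 * Real.sqrt 3 := by
    have htf := (hcf.tendsto 0).mono_left (nhdsWithin_le_nhds (s := Set.Ioi (0:ℝ)))
    rw [hf0] at htf
    have h13 : (5/4 : ℝ) < Real.sqrt 3 := (Real.lt_sqrt (by norm_num)).mpr (by norm_num)
    have h369 : (23/4 : ℝ) < Real.sqrt 369 := (Real.lt_sqrt (by norm_num)).mpr (by norm_num)
    have h3 : (Real.sqrt 3) ^ 2 = 3 := Real.sq_sqrt (by norm_num)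
    have hlow : 12 - 5 * Real.sqrt 3 < Real.sqrt 369 := by linarith
    have hhigh : Real.sqrt 369 < 12 + 5 * Real.sqrt 3 := by
      refine (Real.sqrt_lt' (by nlinarith)).mpr ?_
      nlinarith
    filter_upwards [htf.eventually (eventually_gt_nhds hlow),
      htf.eventually (eventually_lt_nhds hhigh)] with t h1 h2
    exact ⟨h1, h2⟩
  have hevpi : ∀ᶠ t : ℝ in nhdsWithin 0 (Set.Ioi 0), t < π / 6 :=
    Filter.Eventually.filter_mono nhdsWithin_le_nhds
      (eventually_lt_nhds (by positivity))
  have hev0 : ∀ᶠ t : ℝ in nhdsWithin 0 (Set.Ioi 0), 0 < t :=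
    eventually_mem_nhdsWithin
  have hevc := hmain.eventually_gt_atTop c
  obtain ⟨t, ht0, htpi, htf, htPpos, htc⟩ :=
    (hev0.and (hevpi.and (hevf.and (hevPpos.and hevc)))).exists
  exact ⟨t, ht0, htpi, htf, htPpos, (lt_div_iff₀ htPpos).mp htc⟩
end

section
/- Let 0 < t < π/6 and set a = 10·cos t + √(100·cos²t − 75). In Euclidean 3-space define the points A = (0, 0, a), B = (0, 10·sin t, √(100·cos²t − 75)), D = (0, −10·sin t, √(100·cos²t − 75)), E = (12, 0, 0), F = (−12, 0, 0), and C = (0,0,0) (so C is the midpoint of the segment EF). Then: dist(A,B) = dist(A,D) = 10; dist(B,E) = dist(B,F) = dist(D,E) = dist(D,F) = 13; dist(E,F) = 24; dist(A,E) = dist(A,F) = √(69 + 200·cos²t + 20·cos t·√(100·cos²t − 75)); dist(A,C) = a; dist(B,C) = dist(D,C) = 5; and dist(C,E) = dist(C,F) = 12. -/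
open Real

/-- The point of Euclidean 3-space with coordinates `x`, `y`, `z`. -/
noncomputable def pt (x y z : ℝ) : EuclideanSpace ℝ (Fin 3) :=
  (WithLp.equiv 2 (Fin 3 → ℝ)).symm ![x, y, z]

lemma dist_pt (x1 y1 z1 x2 y2 z2 : ℝ) :
    dist (pt x1 y1 z1) (pt x2 y2 z2) =
      Real.sqrt ((x1 - x2) ^ 2 + (y1 - y2) ^ 2 + (z1 - z2) ^ 2) := by
  rw [EuclideanSpace.dist_eq]
  simp [pt, Fin.sum_univ_three, Real.dist_eq, sq_abs]

set_option maxHeartbeats 1600000 in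
theorem stmt_12 (t : ℝ) (ht0 : 0 < t) (ht1 : t < π / 6)
    (a : ℝ) (ha : a = 10 * cos t + Real.sqrt (100 * cos t ^ 2 - 75))
    (A B D E F C : EuclideanSpace ℝ (Fin 3))
    (hA : A = pt 0 0 a)
    (hB : B = pt 0 (10 * sin t) (Real.sqrt (100 * cos t ^ 2 - 75)))
    (hD : D = pt 0 (-(10 * sin t)) (Real.sqrt (100 * cos t ^ 2 - 75)))
    (hE : E = pt 12 0 0) (hF : F = pt (-12) 0 0) (hC : C = pt 0 0 0) :
    C = midpoint ℝ E F ∧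
    dist A B = 10 ∧ dist A D = 10 ∧
    dist B E = 13 ∧ dist B F = 13 ∧ dist D E = 13 ∧ dist D F = 13 ∧
    dist E F = 24 ∧
    dist A E = Real.sqrt (69 + 200 * cos t ^ 2 +
        20 * cos t * Real.sqrt (100 * cos t ^ 2 - 75)) ∧
    dist A F = Real.sqrt (69 + 200 * cos t ^ 2 +
        20 * cos t * Real.sqrt (100 * cos t ^ 2 - 75)) ∧
    dist A C = a ∧ dist B C = 5 ∧ dist D C = 5 ∧
    dist C E = 12 ∧ dist C F = 12 := by
  have hcos : Real.sqrt 3 / 2 < cos t := by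
    have := Real.cos_pi_div_six
    have h := Real.cos_lt_cos_of_nonneg_of_le_pi (le_of_lt ht0)
      (by linarith [Real.pi_pos]) ht1
    linarith [Real.cos_pi_div_six ▸ h]
  have hcos' : 0 < cos t := lt_trans (by positivity) hcos
  have h34 : (3:ℝ)/4 < cos t ^ 2 := by
    have : (Real.sqrt 3 / 2) ^ 2 < cos t ^ 2 :=
      pow_lt_pow_left₀ hcos (by positivity) (by norm_num)
    have h3 : Real.sqrt 3 ^ 2 = 3 := Real.sq_sqrt (by norm_num)
    nlinarith
  have hnn : (0:ℝ) ≤ 100 * cos t ^ 2 - 75 := by nlinarith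
  set s := Real.sqrt (100 * cos t ^ 2 - 75) with hs_def
  have hs_nn : 0 ≤ s := Real.sqrt_nonneg _
  have hs2 : s ^ 2 = 100 * cos t ^ 2 - 75 := Real.sq_sqrt hnn
  have hpyt : sin t ^ 2 + cos t ^ 2 = 1 := Real.sin_sq_add_cos_sq t
  have ha_nn : 0 ≤ a := by rw [ha]; positivity
  subst hA hB hD hE hF hC
  refine ⟨?_, ?_, ?_, ?_, ?_, ?_, ?_, ?_, ?_, ?_, ?_, ?_, ?_, ?_, ?_⟩
  · ext i
    fin_cases i <;> simp [pt, midpoint_eq_smul_add]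
  all_goals rw [dist_pt]
  · rw [show (0 - 0 : ℝ) ^ 2 + (0 - 10 * sin t) ^ 2 + (a - s) ^ 2 = 10 ^ 2 by
      rw [ha]; ring_nf; nlinarith]
    exact Real.sqrt_sq (by norm_num)
  · rw [show (0 - 0 : ℝ) ^ 2 + (0 - -(10 * sin t)) ^ 2 + (a - s) ^ 2 = 10 ^ 2 by
      rw [ha]; ring_nf; nlinarith]
    exact Real.sqrt_sq (by norm_num)
  · rw [show (0 - 12 : ℝ) ^ 2 + (10 * sin t - 0) ^ 2 + (s - 0) ^ 2 = 13 ^ 2 by nlinarith]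
    exact Real.sqrt_sq (by norm_num)
  · rw [show (0 - -12 : ℝ) ^ 2 + (10 * sin t - 0) ^ 2 + (s - 0) ^ 2 = 13 ^ 2 by nlinarith]
    exact Real.sqrt_sq (by norm_num)
  · rw [show (0 - 12 : ℝ) ^ 2 + (-(10 * sin t) - 0) ^ 2 + (s - 0) ^ 2 = 13 ^ 2 by nlinarith]
    exact Real.sqrt_sq (by norm_num)
  · rw [show (0 - -12 : ℝ) ^ 2 + (-(10 * sin t) - 0) ^ 2 + (s - 0) ^ 2 = 13 ^ 2 by nlinarith]
    exact Real.sqrt_sq (by norm_num)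
  · rw [show (12 - -12 : ℝ) ^ 2 + (0 - 0 : ℝ) ^ 2 + (0 - 0 : ℝ) ^ 2 = 24 ^ 2 by norm_num]
    exact Real.sqrt_sq (by norm_num)
  · congr 1
    rw [ha]; nlinarith
  · congr 1
    rw [ha]; nlinarith
  · rw [show (0 - 0 : ℝ) ^ 2 + (0 - 0 : ℝ) ^ 2 + (a - 0) ^ 2 = a ^ 2 by ring]
    exact Real.sqrt_sq ha_nn
  · rw [show (0 - 0 : ℝ) ^ 2 + (10 * sin t - 0) ^ 2 + (s - 0) ^ 2 = 5 ^ 2 by nlinarith]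
    exact Real.sqrt_sq (by norm_num)
  · rw [show (0 - 0 : ℝ) ^ 2 + (-(10 * sin t) - 0) ^ 2 + (s - 0) ^ 2 = 5 ^ 2 by nlinarith]
    exact Real.sqrt_sq (by norm_num)
  · rw [show (0 - 12 : ℝ) ^ 2 + (0 - 0 : ℝ) ^ 2 + (0 - 0 : ℝ) ^ 2 = 12 ^ 2 by norm_num]
    exact Real.sqrt_sq (by norm_num)
  · rw [show (0 - -12 : ℝ) ^ 2 + (0 - 0 : ℝ) ^ 2 + (0 - 0 : ℝ) ^ 2 = 12 ^ 2 by norm_num]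
    exact Real.sqrt_sq (by norm_num)
end

section
/- Let 0 < t < π/6 and set a = 10·cos t + √(100·cos²t − 75). In Euclidean 3-space let A = (0, 0, a), B = (0, 10·sin t, √(100·cos²t − 75)), D = (0, −10·sin t, √(100·cos²t − 75)), E = (12, 0, 0), F = (−12, 0, 0). Then the Lebesgue volume of the convex hull of {A, B, D, E, F} equals 80·(10·cos t + √(100·cos²t − 75))·sin t = 80·a·sin t. -/
open Real MeasureTheory Set

lemma seg_vol (c : ℝ) (y : ℝ) :
    volume {z : ℝ | 0 ≤ z ∧ y + z ≤ c} = ENNReal.ofReal (c - y) := by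
  have : {z : ℝ | 0 ≤ z ∧ y + z ≤ c} = Icc 0 (c - y) := by
    ext z; simp [Icc]; intro _; constructor <;> intro h <;> linarith
  rw [this, Real.volume_Icc, sub_zero]

lemma tri_vol (c : ℝ) (hc : 0 ≤ c) :
    volume {q : ℝ × ℝ | 0 ≤ q.1 ∧ 0 ≤ q.2 ∧ q.1 + q.2 ≤ c} = ENNReal.ofReal (c ^ 2 / 2) := by
  have hm : MeasurableSet {q : ℝ × ℝ | 0 ≤ q.1 ∧ 0 ≤ q.2 ∧ q.1 + q.2 ≤ c} := by
    apply MeasurableSet.inter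
    · exact measurableSet_le measurable_const measurable_fst
    apply MeasurableSet.inter
    · exact measurableSet_le measurable_const measurable_snd
    · exact measurableSet_le (measurable_fst.add measurable_snd) measurable_const
  rw [show (volume : Measure (ℝ × ℝ)) = (volume : Measure ℝ).prod volume from rfl,
    Measure.prod_apply hm]
  have hslice : ∀ y : ℝ, volume (Prod.mk y ⁻¹' {q : ℝ × ℝ | 0 ≤ q.1 ∧ 0 ≤ q.2 ∧ q.1 + q.2 ≤ c})
      = (Icc 0 c).indicator (fun y => ENNReal.ofReal (c - y)) y := by
    intro y
    by_cases hy : y ∈ Icc 0 c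
    · rw [indicator_of_mem hy]
      have : Prod.mk y ⁻¹' {q : ℝ × ℝ | 0 ≤ q.1 ∧ 0 ≤ q.2 ∧ q.1 + q.2 ≤ c}
          = {z : ℝ | 0 ≤ z ∧ y + z ≤ c} := by
        ext z; simp [hy.1]
      rw [this, seg_vol]
    · rw [indicator_of_notMem hy]
      have : Prod.mk y ⁻¹' {q : ℝ × ℝ | 0 ≤ q.1 ∧ 0 ≤ q.2 ∧ q.1 + q.2 ≤ c} = ∅ := by
        ext z; simp only [mem_preimage, mem_setOf_eq, mem_empty_iff_false, iff_false]
        simp only [Icc, mem_setOf_eq, not_and, not_le] at hy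
        rintro ⟨h1, h2, h3⟩
        rcases lt_or_ge y 0 with h | h
        · exact absurd h1 (not_le.2 h)
        · have := hy h; linarith
      rw [this, measure_empty]
  simp_rw [hslice]
  rw [lintegral_indicator measurableSet_Icc]
  rw [← ofReal_integral_eq_lintegral_ofReal]
  · rw [MeasureTheory.integral_Icc_eq_integral_Ioc, ← intervalIntegral.integral_of_le hc]
    have : (∫ y in (0:ℝ)..c, (c - y)) = c ^ 2 / 2 := by
      rw [intervalIntegral.integral_sub intervalIntegrable_const
        (intervalIntegral.intervalIntegrable_id)]
      simp; ring
    rw [this]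
  · apply ContinuousOn.integrableOn_compact isCompact_Icc
    fun_prop
  · filter_upwards [self_mem_ae_restrict measurableSet_Icc] with y hy
    simp only [Icc, mem_setOf_eq] at hy; simp only [Pi.zero_apply]; linarith [hy.2]

lemma simplex_vol_prod :
    volume {p : ℝ × ℝ × ℝ | 0 ≤ p.1 ∧ 0 ≤ p.2.1 ∧ 0 ≤ p.2.2 ∧ p.1 + p.2.1 + p.2.2 ≤ 1}
      = ENNReal.ofReal (1 / 6) := by
  have hm : MeasurableSet {p : ℝ × ℝ × ℝ | 0 ≤ p.1 ∧ 0 ≤ p.2.1 ∧ 0 ≤ p.2.2 ∧ p.1 + p.2.1 + p.2.2 ≤ 1} := by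
    apply MeasurableSet.inter
    · exact measurableSet_le measurable_const measurable_fst
    apply MeasurableSet.inter
    · exact measurableSet_le measurable_const (measurable_fst.comp measurable_snd)
    apply MeasurableSet.inter
    · exact measurableSet_le measurable_const (measurable_snd.comp measurable_snd)
    · exact measurableSet_le
        ((measurable_fst.add (measurable_fst.comp measurable_snd)).add
          (measurable_snd.comp measurable_snd)) measurable_const
  rw [show (volume : Measure (ℝ × ℝ × ℝ)) = (volume : Measure ℝ).prod volume from rfl,
    Measure.prod_apply hm]
  have hslice : ∀ x : ℝ, volume (Prod.mk x ⁻¹' {p : ℝ × ℝ × ℝ | 0 ≤ p.1 ∧ 0 ≤ p.2.1 ∧ 0 ≤ p.2.2 ∧ p.1 + p.2.1 + p.2.2 ≤ 1})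
      = (Icc 0 1).indicator (fun x => ENNReal.ofReal ((1 - x) ^ 2 / 2)) x := by
    intro x
    by_cases hx : x ∈ Icc (0:ℝ) 1
    · rw [indicator_of_mem hx]
      have he : Prod.mk x ⁻¹' {p : ℝ × ℝ × ℝ | 0 ≤ p.1 ∧ 0 ≤ p.2.1 ∧ 0 ≤ p.2.2 ∧ p.1 + p.2.1 + p.2.2 ≤ 1}
          = {q : ℝ × ℝ | 0 ≤ q.1 ∧ 0 ≤ q.2 ∧ q.1 + q.2 ≤ 1 - x} := by
        ext q; simp only [mem_preimage, mem_setOf_eq]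
        constructor
        · rintro ⟨_, h2, h3, h4⟩; exact ⟨h2, h3, by linarith⟩
        · rintro ⟨h2, h3, h4⟩; exact ⟨hx.1, h2, h3, by linarith⟩
      rw [he, tri_vol _ (by linarith [hx.2])]
    · rw [indicator_of_notMem hx]
      have he : Prod.mk x ⁻¹' {p : ℝ × ℝ × ℝ | 0 ≤ p.1 ∧ 0 ≤ p.2.1 ∧ 0 ≤ p.2.2 ∧ p.1 + p.2.1 + p.2.2 ≤ 1} = ∅ := by
        ext q; simp only [mem_preimage, mem_setOf_eq, mem_empty_iff_false, iff_false]
        simp only [Icc, mem_setOf_eq, not_and, not_le] at hx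
        rintro ⟨h1, h2, h3, h4⟩
        have := hx h1; linarith
      rw [he, measure_empty]
  simp_rw [hslice]
  rw [lintegral_indicator measurableSet_Icc]
  rw [← ofReal_integral_eq_lintegral_ofReal]
  · rw [MeasureTheory.integral_Icc_eq_integral_Ioc, ← intervalIntegral.integral_of_le zero_le_one]
    have : (∫ x in (0:ℝ)..1, ((1 - x) ^ 2 / 2)) = 1 / 6 := by
      have : ∀ x : ℝ, (1 - x) ^ 2 / 2 = 1/2 - x + x ^ 2 / 2 := by intro x; ring
      simp_rw [this]
      rw [intervalIntegral.integral_add (by apply Continuous.intervalIntegrable; fun_prop)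
        (by apply Continuous.intervalIntegrable; fun_prop),
        intervalIntegral.integral_sub (by apply Continuous.intervalIntegrable; fun_prop)
        (by apply Continuous.intervalIntegrable; fun_prop)]
      simp [integral_id, intervalIntegral.integral_div, integral_pow]
      norm_num
    rw [this]
  · apply ContinuousOn.integrableOn_compact isCompact_Icc
    fun_prop
  · filter_upwards [] with y
    positivity

lemma simplex_vol_pi :
    volume {x : Fin 3 → ℝ | 0 ≤ x 0 ∧ 0 ≤ x 1 ∧ 0 ≤ x 2 ∧ x 0 + x 1 + x 2 ≤ 1}
      = ENNReal.ofReal (1 / 6) := by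
  set S := {p : ℝ × ℝ × ℝ | 0 ≤ p.1 ∧ 0 ≤ p.2.1 ∧ 0 ≤ p.2.2 ∧ p.1 + p.2.1 + p.2.2 ≤ 1}
  have hmS : MeasurableSet S := by
    apply MeasurableSet.inter
    · exact measurableSet_le measurable_const measurable_fst
    apply MeasurableSet.inter
    · exact measurableSet_le measurable_const (measurable_fst.comp measurable_snd)
    apply MeasurableSet.inter
    · exact measurableSet_le measurable_const (measurable_snd.comp measurable_snd)
    · exact measurableSet_le
        ((measurable_fst.add (measurable_fst.comp measurable_snd)).add
          (measurable_snd.comp measurable_snd)) measurable_const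
  have h1 := volume_preserving_piFinSuccAbove (fun _ : Fin 3 => ℝ) 0
  have h2 := volume_preserving_piFinTwo (fun _ : Fin 2 => ℝ)
  have h2' : MeasurePreserving (Prod.map (id : ℝ → ℝ) (MeasurableEquiv.piFinTwo (fun _ : Fin 2 => ℝ)))
      volume volume := (MeasurePreserving.id volume).prod h2
  have hcomp := h2'.comp h1
  have hset : {x : Fin 3 → ℝ | 0 ≤ x 0 ∧ 0 ≤ x 1 ∧ 0 ≤ x 2 ∧ x 0 + x 1 + x 2 ≤ 1}
      = (Prod.map (id : ℝ → ℝ) (MeasurableEquiv.piFinTwo (fun _ : Fin 2 => ℝ))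
          ∘ (MeasurableEquiv.piFinSuccAbove (fun _ : Fin 3 => ℝ) 0)) ⁻¹' S := by
    ext x
    simp [S, MeasurableEquiv.piFinSuccAbove, MeasurableEquiv.piFinTwo, Fin.insertNthEquiv,
      Prod.map, Fin.succAbove, Fin.tail]
  rw [hset, hcomp.measure_preimage hmS.nullMeasurableSet, simplex_vol_prod]

lemma mem_hull4 {V : Type*} [AddCommGroup V] [Module ℝ V] {p v0 v1 v2 v3 : V}
    (w0 w1 w2 w3 : ℝ) (h0 : 0 ≤ w0) (h1 : 0 ≤ w1) (h2 : 0 ≤ w2) (h3 : 0 ≤ w3)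
    (hsum : w0 + w1 + w2 + w3 = 1)
    (hp : p = w0 • v0 + w1 • v1 + w2 • v2 + w3 • v3) :
    p ∈ convexHull ℝ ({v0, v1, v2, v3} : Set V) := by
  have := (convex_convexHull ℝ ({v0, v1, v2, v3} : Set V)).sum_mem
    (t := Finset.univ) (w := ![w0, w1, w2, w3]) (z := ![v0, v1, v2, v3])
    (fun i _ => by fin_cases i <;> assumption)
    (by simp [Fin.sum_univ_four, hsum])
    (fun i _ => by fin_cases i <;> (apply subset_convexHull; simp))
  rw [Fin.sum_univ_four] at this
  simpa [hp] using this

lemma hull_eq_simplex :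
    convexHull ℝ ({0, Pi.single 0 1, Pi.single 1 1, Pi.single 2 1} : Set (Fin 3 → ℝ))
      = {x : Fin 3 → ℝ | 0 ≤ x 0 ∧ 0 ≤ x 1 ∧ 0 ≤ x 2 ∧ x 0 + x 1 + x 2 ≤ 1} := by
  apply le_antisymm
  · apply convexHull_min
    · rintro x (rfl | rfl | rfl | rfl) <;>
        simp [Pi.single_apply] <;> norm_num
    · rintro x ⟨hx0, hx1, hx2, hx3⟩ y ⟨hy0, hy1, hy2, hy3⟩ a b ha hb hab
      refine ⟨?_, ?_, ?_, ?_⟩ <;> simp only [Pi.add_apply, Pi.smul_apply, smul_eq_mul] <;> nlinarith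
  · rintro x ⟨hx0, hx1, hx2, hx3⟩
    apply mem_hull4 (1 - (x 0 + x 1 + x 2)) (x 0) (x 1) (x 2) (by linarith) hx0 hx1 hx2
      (by ring)
    funext j
    fin_cases j <;> simp [Pi.single_apply]

lemma tetra_vol (v1 v2 v3 : Fin 3 → ℝ) :
    volume (convexHull ℝ ({0, v1, v2, v3} : Set (Fin 3 → ℝ)))
      = ENNReal.ofReal (|Matrix.det (Matrix.of ![v1, v2, v3])| / 6) := by
  let M : Matrix (Fin 3) (Fin 3) ℝ := (Matrix.of ![v1, v2, v3]).transpose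
  have himg : convexHull ℝ ({0, v1, v2, v3} : Set (Fin 3 → ℝ))
      = Matrix.toLin' M '' (convexHull ℝ ({0, Pi.single 0 1, Pi.single 1 1, Pi.single 2 1} : Set (Fin 3 → ℝ))) := by
    rw [LinearMap.image_convexHull]
    congr 1
    have e0 : Matrix.toLin' M (Pi.single 0 1) = v1 := by
      funext i
      simp [Matrix.toLin'_apply, M, Matrix.mulVec_single, Matrix.transpose_apply, Matrix.vecHead, Matrix.vecTail, Matrix.transpose, Function.comp]
    have e1 : Matrix.toLin' M (Pi.single 1 1) = v2 := by
      funext i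
      simp [Matrix.toLin'_apply, M, Matrix.mulVec_single, Matrix.transpose_apply, Matrix.vecHead, Matrix.vecTail, Matrix.transpose, Function.comp]
    have e2 : Matrix.toLin' M (Pi.single 2 1) = v3 := by
      funext i
      simp [Matrix.toLin'_apply, M, Matrix.mulVec_single, Matrix.transpose_apply, Matrix.vecHead, Matrix.vecTail, Matrix.transpose, Function.comp]
    rw [Set.image_insert_eq, Set.image_insert_eq, Set.image_insert_eq, Set.image_singleton,
      map_zero, e0, e1, e2]
  rw [himg, Measure.addHaar_image_linearMap, hull_eq_simplex, simplex_vol_pi,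
    LinearMap.det_toLin']
  rw [← ENNReal.ofReal_mul (abs_nonneg _)]
  congr 1
  rw [Matrix.det_transpose]
  ring

set_option maxHeartbeats 1000000 in
lemma bipyramid_decomp (a b s : ℝ) (ha : 0 < a) (hs : 0 ≤ s) (hsa : s ≤ a) :
    convexHull ℝ ({![0,0,a], ![0,b,s], ![0,-b,s], ![12,0,0], ![-12,0,0]} : Set (Fin 3 → ℝ))
      = convexHull ℝ ({0, ![0,0,a], ![0,b,s], ![12,0,0]} : Set (Fin 3 → ℝ))
      ∪ convexHull ℝ ({0, ![0,0,a], ![0,-b,s], ![12,0,0]} : Set (Fin 3 → ℝ))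
      ∪ convexHull ℝ ({0, ![0,0,a], ![0,b,s], ![-12,0,0]} : Set (Fin 3 → ℝ))
      ∪ convexHull ℝ ({0, ![0,0,a], ![0,-b,s], ![-12,0,0]} : Set (Fin 3 → ℝ)) := by
  set vA : Fin 3 → ℝ := ![0,0,a]
  set vB : Fin 3 → ℝ := ![0,b,s]
  set vD : Fin 3 → ℝ := ![0,-b,s]
  set vE : Fin 3 → ℝ := ![12,0,0]
  set vF : Fin 3 → ℝ := ![-12,0,0]
  have hzero : (0 : Fin 3 → ℝ) ∈ convexHull ℝ ({vA, vB, vD, vE, vF} : Set (Fin 3 → ℝ)) := by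
    have hseg : (0 : Fin 3 → ℝ) ∈ segment ℝ vE vF := by
      refine ⟨1/2, 1/2, by norm_num, by norm_num, by norm_num, ?_⟩
      funext i; fin_cases i <;> simp [vE, vF] <;> norm_num
    have := segment_subset_convexHull (𝕜 := ℝ) (show vE ∈ ({vA, vB, vD, vE, vF} : Set (Fin 3 → ℝ)) by simp)
      (show vF ∈ ({vA, vB, vD, vE, vF} : Set (Fin 3 → ℝ)) by simp)
    exact this hseg
  apply le_antisymm
  · -- forward inclusion
    intro p hp
    -- extract coefficients
    rw [show ({vA, vB, vD, vE, vF} : Set (Fin 3 → ℝ))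
        = insert vA (insert vB (insert vD ({vE, vF} : Set (Fin 3 → ℝ)))) from rfl] at hp
    rw [convexHull_insert (by exact ⟨vB, by simp⟩)] at hp
    simp only [mem_convexJoin, mem_singleton_iff, exists_eq_left, exists_prop] at hp
    obtain ⟨q1, hq1, hpseg⟩ := hp
    rw [convexHull_insert (by exact ⟨vD, by simp⟩)] at hq1
    simp only [mem_convexJoin, mem_singleton_iff, exists_eq_left, exists_prop] at hq1
    obtain ⟨q2, hq2, hq1seg⟩ := hq1
    rw [convexHull_insert (by exact ⟨vE, by simp⟩)] at hq2
    simp only [mem_convexJoin, mem_singleton_iff, exists_eq_left, exists_prop] at hq2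
    obtain ⟨q3, hq3, hq2seg⟩ := hq2
    rw [convexHull_pair] at hq3
    obtain ⟨x, y, hx, hy, hxy, hq3⟩ := hq3
    obtain ⟨w, w', hw, hw', hww, hq2e⟩ := hq2seg
    obtain ⟨v, v', hv, hv', hvv, hq1e⟩ := hq1seg
    obtain ⟨u, u', hu, hu', huu, hpe⟩ := hpseg
    -- p = α vA + β vB + γ vD + δ vE + ε vF
    set α := u with hαdef
    set β := u' * v with hβdef
    set γ := u' * v' * w with hγdef
    set δ := u' * v' * w' * x with hδdef
    set ε := u' * v' * w' * y with hεdef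
    have hα : 0 ≤ α := hu
    have hβ : 0 ≤ β := mul_nonneg hu' hv
    have hγ : 0 ≤ γ := mul_nonneg (mul_nonneg hu' hv') hw
    have hδ : 0 ≤ δ := mul_nonneg (mul_nonneg (mul_nonneg hu' hv') hw') hx
    have hε : 0 ≤ ε := mul_nonneg (mul_nonneg (mul_nonneg hu' hv') hw') hy
    have hsum : α + β + γ + δ + ε = 1 := by
      rw [hαdef, hβdef, hγdef, hδdef, hεdef]
      linear_combination u'*v'*w'*hxy + u'*v'*hww + u'*hvv + huu
    have hpeq : p = α • vA + β • vB + γ • vD + δ • vE + ε • vF := by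
      rw [← hpe, ← hq1e, ← hq2e, ← hq3]
      module
    have key : ∀ i : Fin 3, p i = α * vA i + β * vB i + γ * vD i + δ * vE i + ε * vF i := by
      intro i; rw [hpeq]; simp
    clear hpe hq1e hq2e hq3 hpeq
    -- case analysis
    rcases le_total γ β with hbg | hbg <;> rcases le_total ε δ with hde | hde
    · -- B side, E side
      refine mem_union_left _ (mem_union_left _ (mem_union_left _ ?_))
      refine mem_hull4 (1 - (α + 2*γ*s/a) - (β - γ) - (δ - ε)) (α + 2*γ*s/a) (β - γ) (δ - ε)
        ?_ (by positivity) (by linarith) (by linarith) (by ring) ?_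
      · have h1 : 2*γ*s/a ≤ 2*γ := by
          rw [div_le_iff₀ ha]; nlinarith
        linarith
      · funext i; fin_cases i <;>
          (rw [key]; simp [vA, vB, vD, vE, vF]; (try field_simp); (try ring))
    · -- B side, F side
      refine mem_union_left _ (mem_union_right _ ?_)
      refine mem_hull4 (1 - (α + 2*γ*s/a) - (β - γ) - (ε - δ)) (α + 2*γ*s/a) (β - γ) (ε - δ)
        ?_ (by positivity) (by linarith) (by linarith) (by ring) ?_
      · have h1 : 2*γ*s/a ≤ 2*γ := by
          rw [div_le_iff₀ ha]; nlinarith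
        linarith
      · funext i; fin_cases i <;>
          (rw [key]; simp [vA, vB, vD, vE, vF]; (try field_simp); (try ring))
    · -- D side, E side
      refine mem_union_left _ (mem_union_left _ (mem_union_right _ ?_))
      refine mem_hull4 (1 - (α + 2*β*s/a) - (γ - β) - (δ - ε)) (α + 2*β*s/a) (γ - β) (δ - ε)
        ?_ (by positivity) (by linarith) (by linarith) (by ring) ?_
      · have h1 : 2*β*s/a ≤ 2*β := by
          rw [div_le_iff₀ ha]; nlinarith
        linarith
      · funext i; fin_cases i <;>
          (rw [key]; simp [vA, vB, vD, vE, vF]; (try field_simp); (try ring))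
    · -- D side, F side
      refine mem_union_right _ ?_
      refine mem_hull4 (1 - (α + 2*β*s/a) - (γ - β) - (ε - δ)) (α + 2*β*s/a) (γ - β) (ε - δ)
        ?_ (by positivity) (by linarith) (by linarith) (by ring) ?_
      · have h1 : 2*β*s/a ≤ 2*β := by
          rw [div_le_iff₀ ha]; nlinarith
        linarith
      · funext i; fin_cases i <;>
          (rw [key]; simp [vA, vB, vD, vE, vF]; (try field_simp); (try ring))
  · -- reverse inclusion
    have hsub : ∀ (q r : Fin 3 → ℝ), q ∈ ({vA, vB, vD, vE, vF} : Set (Fin 3 → ℝ)) →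
        r ∈ ({vA, vB, vD, vE, vF} : Set (Fin 3 → ℝ)) →
        convexHull ℝ ({0, vA, q, r} : Set (Fin 3 → ℝ))
          ⊆ convexHull ℝ ({vA, vB, vD, vE, vF} : Set (Fin 3 → ℝ)) := by
      intro q r hq hr
      apply convexHull_min _ (convex_convexHull _ _)
      intro x hx
      simp only [mem_insert_iff, mem_singleton_iff] at hx
      rcases hx with rfl | rfl | rfl | rfl
      · exact hzero
      · exact subset_convexHull _ _ (mem_insert _ _)
      · exact subset_convexHull _ _ hq
      · exact subset_convexHull _ _ hr

    have mB : vB ∈ ({vA, vB, vD, vE, vF} : Set (Fin 3 → ℝ)) := by right; left; rfl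
    have mD : vD ∈ ({vA, vB, vD, vE, vF} : Set (Fin 3 → ℝ)) := by right; right; left; rfl
    have mE : vE ∈ ({vA, vB, vD, vE, vF} : Set (Fin 3 → ℝ)) := by right; right; right; left; rfl
    have mF : vF ∈ ({vA, vB, vD, vE, vF} : Set (Fin 3 → ℝ)) := by right; right; right; right; rfl
    exact union_subset (union_subset (union_subset (hsub _ _ mB mE) (hsub _ _ mD mE))
      (hsub _ _ mB mF)) (hsub _ _ mD mF)

lemma hyperplane_null (i : Fin 3) : volume {p : Fin 3 → ℝ | p i = 0} = 0 := by
  rw [volume_pi]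
  exact Measure.pi_hyperplane _ i 0

lemma hull4_halfspace_ge {v0 v1 v2 v3 : Fin 3 → ℝ} (i : Fin 3)
    (h0 : 0 ≤ v0 i) (h1 : 0 ≤ v1 i) (h2 : 0 ≤ v2 i) (h3 : 0 ≤ v3 i) :
    convexHull ℝ ({v0, v1, v2, v3} : Set (Fin 3 → ℝ)) ⊆ {x | 0 ≤ x i} := by
  apply convexHull_min
  · intro x hx
    simp only [mem_insert_iff, mem_singleton_iff] at hx
    rcases hx with rfl | rfl | rfl | rfl <;> assumption
  · exact convex_halfSpace_ge ⟨fun x y => rfl, fun c x => rfl⟩ 0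

lemma hull4_halfspace_le {v0 v1 v2 v3 : Fin 3 → ℝ} (i : Fin 3)
    (h0 : v0 i ≤ 0) (h1 : v1 i ≤ 0) (h2 : v2 i ≤ 0) (h3 : v3 i ≤ 0) :
    convexHull ℝ ({v0, v1, v2, v3} : Set (Fin 3 → ℝ)) ⊆ {x | x i ≤ 0} := by
  apply convexHull_min
  · intro x hx
    simp only [mem_insert_iff, mem_singleton_iff] at hx
    rcases hx with rfl | rfl | rfl | rfl <;> assumption
  · exact convex_halfSpace_le ⟨fun x y => rfl, fun c x => rfl⟩ 0

theorem stmt_13 (t : ℝ) (ht0 : 0 < t) (ht1 : t < π / 6)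
    (a : ℝ) (ha : a = 10 * cos t + Real.sqrt (100 * cos t ^ 2 - 75))
    (A B D E F : EuclideanSpace ℝ (Fin 3))
    (hA : A = pt 0 0 a)
    (hB : B = pt 0 (10 * sin t) (Real.sqrt (100 * cos t ^ 2 - 75)))
    (hD : D = pt 0 (-(10 * sin t)) (Real.sqrt (100 * cos t ^ 2 - 75)))
    (hE : E = pt 12 0 0) (hF : F = pt (-12) 0 0) :
    MeasureTheory.volume (convexHull ℝ ({A, B, D, E, F} : Set (EuclideanSpace ℝ (Fin 3))))
      = ENNReal.ofReal (80 * a * sin t) := by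
  subst hA hB hD hE hF
  -- basic real facts
  have hpi := Real.pi_pos
  have hcos6 : Real.cos (π / 6) < Real.cos t := by
    apply Real.cos_lt_cos_of_nonneg_of_le_pi ht0.le (by linarith) ht1
  rw [Real.cos_pi_div_six] at hcos6
  have hsqrt3 : (0:ℝ) ≤ Real.sqrt 3 := Real.sqrt_nonneg 3
  have hsqrt3sq : Real.sqrt 3 ^ 2 = 3 := Real.sq_sqrt (by norm_num)
  have hcospos : 0 < Real.cos t := by nlinarith
  have h75 : (0:ℝ) ≤ 100 * Real.cos t ^ 2 - 75 := by nlinarith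
  set s : ℝ := Real.sqrt (100 * Real.cos t ^ 2 - 75) with hsdef
  have hs0 : 0 ≤ s := Real.sqrt_nonneg _
  have ha0 : 0 < a := by rw [ha]; positivity
  have hsa : s ≤ a := by rw [ha]; nlinarith
  have hsin : 0 < Real.sin t := Real.sin_pos_of_pos_of_lt_pi ht0 (by linarith)
  set b : ℝ := 10 * Real.sin t with hbdef
  have hb0 : 0 < b := by positivity
  -- transfer to pi space
  set vA : Fin 3 → ℝ := ![0,0,a]
  set vB : Fin 3 → ℝ := ![0,b,s]
  set vD : Fin 3 → ℝ := ![0,-b,s]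
  set vE : Fin 3 → ℝ := ![12,0,0]
  set vF : Fin 3 → ℝ := ![-12,0,0]
  set e := (MeasurableEquiv.toLp 2 (Fin 3 → ℝ)).symm with hedef
  have hlin : IsLinearMap ℝ (⇑e) := ⟨fun x y => rfl, fun c x => rfl⟩
  have himg : ⇑e '' (convexHull ℝ ({pt 0 0 a, pt 0 b s, pt 0 (-b) s, pt 12 0 0, pt (-12) 0 0}
      : Set (EuclideanSpace ℝ (Fin 3))))
      = convexHull ℝ ({vA, vB, vD, vE, vF} : Set (Fin 3 → ℝ)) := by
    rw [hlin.image_convexHull]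
    congr 1
    rw [image_insert_eq, image_insert_eq, image_insert_eq, image_insert_eq, image_singleton]
    rfl
  have hpre : (convexHull ℝ ({pt 0 0 a, pt 0 b s, pt 0 (-b) s, pt 12 0 0, pt (-12) 0 0}
      : Set (EuclideanSpace ℝ (Fin 3))))
      = ⇑e ⁻¹' (convexHull ℝ ({vA, vB, vD, vE, vF} : Set (Fin 3 → ℝ))) := by
    rw [← himg, Set.preimage_image_eq _ e.injective]
  have hconv : Convex ℝ (convexHull ℝ ({vA, vB, vD, vE, vF} : Set (Fin 3 → ℝ))) :=
    convex_convexHull _ _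
  rw [hpre, (EuclideanSpace.volume_preserving_symm_measurableEquiv_toLp (Fin 3)).measure_preimage
    (hconv.nullMeasurableSet _)]
  rw [bipyramid_decomp a b s ha0 hs0 hsa]
  -- names for the four tetrahedra
  set T1 := convexHull ℝ ({0, vA, vB, vE} : Set (Fin 3 → ℝ)) with hT1
  set T2 := convexHull ℝ ({0, vA, vD, vE} : Set (Fin 3 → ℝ)) with hT2
  set T3 := convexHull ℝ ({0, vA, vB, vF} : Set (Fin 3 → ℝ)) with hT3
  set T4 := convexHull ℝ ({0, vA, vD, vF} : Set (Fin 3 → ℝ)) with hT4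
  -- halfspace facts
  have hvB1 : (0:ℝ) ≤ vB 1 := by simp only [vB, Matrix.cons_val_one, Matrix.head_cons]; positivity
  have hvD1 : vD 1 ≤ (0:ℝ) := by simp only [vD, Matrix.cons_val_one, Matrix.head_cons]; simp; positivity
  have hT1y : T1 ⊆ {x | 0 ≤ x 1} := hull4_halfspace_ge 1 (by norm_num) (by norm_num [vA]) hvB1 (by norm_num [vE])
  have hT2y : T2 ⊆ {x | x 1 ≤ 0} := hull4_halfspace_le 1 (by norm_num) (by norm_num [vA]) hvD1 (by norm_num [vE])
  have hT3y : T3 ⊆ {x | 0 ≤ x 1} := hull4_halfspace_ge 1 (by norm_num) (by norm_num [vA]) hvB1 (by norm_num [vF])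
  have hT4y : T4 ⊆ {x | x 1 ≤ 0} := hull4_halfspace_le 1 (by norm_num) (by norm_num [vA]) hvD1 (by norm_num [vF])
  have hT1x : T1 ⊆ {x | 0 ≤ x 0} := hull4_halfspace_ge 0 (by norm_num) (by norm_num [vA]) (by norm_num [vB]) (by norm_num [vE])
  have hT2x : T2 ⊆ {x | 0 ≤ x 0} := hull4_halfspace_ge 0 (by norm_num) (by norm_num [vA]) (by norm_num [vD]) (by norm_num [vE])
  have hT3x : T3 ⊆ {x | x 0 ≤ 0} := hull4_halfspace_le 0 (by norm_num) (by norm_num [vA]) (by norm_num [vB]) (by norm_num [vF])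
  have hT4x : T4 ⊆ {x | x 0 ≤ 0} := hull4_halfspace_le 0 (by norm_num) (by norm_num [vA]) (by norm_num [vD]) (by norm_num [vF])
  -- null intersections
  have nully : ∀ (S S' : Set (Fin 3 → ℝ)), S ⊆ {x | 0 ≤ x 1} → S' ⊆ {x | x 1 ≤ 0} →
      volume (S ∩ S') = 0 := by
    intro S S' h h'
    refine measure_mono_null ?_ (hyperplane_null 1)
    rintro x ⟨hx, hx'⟩
    exact le_antisymm (h' hx') (h hx)
  have nullx : ∀ (S S' : Set (Fin 3 → ℝ)), S ⊆ {x | 0 ≤ x 0} → S' ⊆ {x | x 0 ≤ 0} →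
      volume (S ∩ S') = 0 := by
    intro S S' h h'
    refine measure_mono_null ?_ (hyperplane_null 0)
    rintro x ⟨hx, hx'⟩
    exact le_antisymm (h' hx') (h hx)
  have nm : ∀ (v1 v2 v3 : Fin 3 → ℝ), NullMeasurableSet
      (convexHull ℝ ({0, v1, v2, v3} : Set (Fin 3 → ℝ))) volume :=
    fun v1 v2 v3 => (convex_convexHull ℝ _).nullMeasurableSet _
  have h12 : volume (T1 ∩ T2) = 0 := nully _ _ hT1y hT2y
  have h34 : volume (T3 ∩ T4) = 0 := nully _ _ hT3y hT4y
  have h13 : volume (T1 ∩ T3) = 0 := nullx _ _ hT1x hT3x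
  have h14 : volume (T1 ∩ T4) = 0 := nullx _ _ hT1x hT4x
  have h23 : volume (T2 ∩ T3) = 0 := nullx _ _ hT2x hT3x
  have h24 : volume (T2 ∩ T4) = 0 := nullx _ _ hT2x hT4x
  have hu1 : volume (T1 ∪ T2 ∪ T3 ∪ T4) = volume (T1 ∪ T2 ∪ T3) + volume T4 := by
    apply measure_union₀ (nm _ _ _)
    show volume _ = 0
    refine measure_mono_null (fun x hx => ?_)
      (measure_union_null (measure_union_null h14 h24) h34 :
        volume ((T1 ∩ T4 ∪ T2 ∩ T4) ∪ T3 ∩ T4) = 0)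
    obtain ⟨(hx1 | hx1) | hx1, hx4⟩ := hx
    · exact Or.inl (Or.inl ⟨hx1, hx4⟩)
    · exact Or.inl (Or.inr ⟨hx1, hx4⟩)
    · exact Or.inr ⟨hx1, hx4⟩
  have hu2 : volume (T1 ∪ T2 ∪ T3) = volume (T1 ∪ T2) + volume T3 := by
    apply measure_union₀ (nm _ _ _)
    show volume _ = 0
    refine measure_mono_null (fun x hx => ?_)
      (measure_union_null h13 h23 : volume (T1 ∩ T3 ∪ T2 ∩ T3) = 0)
    obtain ⟨hx1 | hx1, hx3⟩ := hx
    · exact Or.inl ⟨hx1, hx3⟩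
    · exact Or.inr ⟨hx1, hx3⟩
  have hu3 : volume (T1 ∪ T2) = volume T1 + volume T2 := by
    apply measure_union₀ (nm _ _ _)
    exact h12
  rw [hu1, hu2, hu3]
  -- volumes of the tetrahedra
  have d1 : volume T1 = ENNReal.ofReal (2 * a * b) := by
    rw [hT1, tetra_vol]
    congr 1
    have hdet : Matrix.det (Matrix.of ![vA, vB, vE]) = -(12*a*b) := by
      rw [Matrix.det_fin_three]
      norm_num [vA, vB, vE]
      simp
      ring
    rw [hdet, abs_neg, abs_of_nonneg (by positivity)]
    ring
  have d2 : volume T2 = ENNReal.ofReal (2 * a * b) := by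
    rw [hT2, tetra_vol]
    congr 1
    have hdet : Matrix.det (Matrix.of ![vA, vD, vE]) = 12*a*b := by
      rw [Matrix.det_fin_three]
      norm_num [vA, vD, vE]
      simp
      ring
    rw [hdet, abs_of_nonneg (by positivity)]
    ring
  have d3 : volume T3 = ENNReal.ofReal (2 * a * b) := by
    rw [hT3, tetra_vol]
    congr 1
    have hdet : Matrix.det (Matrix.of ![vA, vB, vF]) = 12*a*b := by
      rw [Matrix.det_fin_three]
      norm_num [vA, vB, vF]
      simp
      ring
    rw [hdet, abs_of_nonneg (by positivity)]
    ring
  have d4 : volume T4 = ENNReal.ofReal (2 * a * b) := by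
    rw [hT4, tetra_vol]
    congr 1
    have hdet : Matrix.det (Matrix.of ![vA, vD, vF]) = -(12*a*b) := by
      rw [Matrix.det_fin_three]
      norm_num [vA, vD, vF]
      simp
      ring
    rw [hdet, abs_neg, abs_of_nonneg (by positivity)]
    ring
  rw [d1, d2, d3, d4, ← ENNReal.ofReal_add (by positivity) (by positivity),
    ← ENNReal.ofReal_add (by positivity) (by positivity),
    ← ENNReal.ofReal_add (by positivity) (by positivity)]
  congr 1
  rw [hbdef]
  ring
end

section
/- Let 0 < t < π/6 and set a = 10·cos t + √(100·cos²t − 75). In Euclidean 3-space let A = (0, 0, a), B = (0, 10·sin t, √(100·cos²t − 75)), D = (0, −10·sin t, √(100·cos²t − 75)), E = (12, 0, 0), F = (−12, 0, 0). Then each of the five points A, B, D, E, F is an extreme point of the convex hull of {A, B, D, E, F}. -/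
open Real

lemma exposed_extreme {E : Type*} [NormedAddCommGroup E] [NormedSpace ℝ E]
    {s : Set E} {x : E} (hx : x ∈ s) (f : E →L[ℝ] ℝ)
    (h : ∀ y ∈ s, y ≠ x → f y < f x) :
    x ∈ Set.extremePoints ℝ (convexHull ℝ s) := by
  have hle : ∀ y ∈ convexHull ℝ s, f y ≤ f x := by
    intro y hy
    have : convexHull ℝ s ⊆ {y | f y ≤ f x} := by
      apply convexHull_min
      · intro z hz
        show f z ≤ f x
        rcases eq_or_ne z x with rfl | hzx
        · exact le_refl (f z)
        · exact le_of_lt (h z hz hzx)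
      · exact convex_halfSpace_le ⟨fun a b => f.map_add a b, fun c a => f.map_smul c a⟩ (f x)
    exact this hy
  have huniq : ∀ y ∈ convexHull ℝ s, f y = f x → y = x := by
    intro y hy hfy
    rw [convexHull_eq] at hy
    obtain ⟨ι, u, w, z, hw0, hw1, hzs, hcm⟩ := hy
    rw [Finset.centerMass_eq_of_sum_1 _ _ hw1] at hcm
    have hfz : ∀ i ∈ u, f (z i) ≤ f x := fun i hi => by
      rcases eq_or_ne (z i) x with hzi | hzi
      · rw [hzi]
      · exact le_of_lt (h _ (hzs i hi) hzi)
    have h1 : ∑ i ∈ u, w i * f (z i) = f y := by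
      rw [← hcm, map_sum]
      simp [smul_eq_mul]
    have hsum : ∑ i ∈ u, w i * (f x - f (z i)) = 0 := by
      simp only [mul_sub, Finset.sum_sub_distrib, ← Finset.sum_mul, hw1, h1, hfy, one_mul,
        sub_self]
    have hzero : ∀ i ∈ u, w i * (f x - f (z i)) = 0 := by
      rw [Finset.sum_eq_zero_iff_of_nonneg] at hsum
      · exact hsum
      · intro i hi
        exact mul_nonneg (hw0 i hi) (by linarith [hfz i hi])
    have heq : ∀ i ∈ u, w i • z i = w i • x := by
      intro i hi
      rcases mul_eq_zero.1 (hzero i hi) with h0 | h0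
      · rw [h0, zero_smul, zero_smul]
      · have hfzi : f (z i) = f x := by linarith
        rcases eq_or_ne (z i) x with hzi | hzi
        · rw [hzi]
        · exact absurd hfzi (ne_of_lt (h _ (hzs i hi) hzi))
    calc y = ∑ i ∈ u, w i • z i := hcm.symm
      _ = ∑ i ∈ u, w i • x := Finset.sum_congr rfl heq
      _ = (∑ i ∈ u, w i) • x := by rw [Finset.sum_smul]
      _ = x := by rw [hw1, one_smul]
  have hexp : IsExposed ℝ (convexHull ℝ s) {x} := by
    intro _
    refine ⟨f, Set.ext fun y => ⟨?_, ?_⟩⟩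
    · rintro rfl
      exact ⟨subset_convexHull ℝ s hx, hle⟩
    · rintro ⟨hy, hmax⟩
      exact huniq y hy (le_antisymm (hle y hy) (hmax x (subset_convexHull ℝ s hx)))
  exact hexp.isExtreme.mem_extremePoints

theorem stmt_14 (t : ℝ) (ht0 : 0 < t) (ht1 : t < π / 6)
    (a : ℝ) (ha : a = 10 * cos t + Real.sqrt (100 * cos t ^ 2 - 75))
    (A B D E F : EuclideanSpace ℝ (Fin 3))
    (hA : A = pt 0 0 a)
    (hB : B = pt 0 (10 * sin t) (Real.sqrt (100 * cos t ^ 2 - 75)))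
    (hD : D = pt 0 (-(10 * sin t)) (Real.sqrt (100 * cos t ^ 2 - 75)))
    (hE : E = pt 12 0 0) (hF : F = pt (-12) 0 0) :
    ∀ X ∈ ({A, B, D, E, F} : Set (EuclideanSpace ℝ (Fin 3))),
      X ∈ Set.extremePoints ℝ
        (convexHull ℝ ({A, B, D, E, F} : Set (EuclideanSpace ℝ (Fin 3)))) := by
  have hπ : (0:ℝ) < π := Real.pi_pos
  have hsin : 0 < sin t := Real.sin_pos_of_pos_of_lt_pi ht0 (by linarith)
  have hcos : 0 < cos t := Real.cos_pos_of_mem_Ioo ⟨by linarith, by linarith⟩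
  set s : ℝ := Real.sqrt (100 * cos t ^ 2 - 75) with hs
  have hs0 : 0 ≤ s := Real.sqrt_nonneg _
  have has : s < a := by rw [ha]; linarith
  have ha0 : 0 < a := by rw [ha]; linarith
  -- coordinate values
  have e0A : EuclideanSpace.proj (0:Fin 3) A = 0 := by rw [hA]; rfl
  have e1A : EuclideanSpace.proj (1:Fin 3) A = 0 := by rw [hA]; rfl
  have e2A : EuclideanSpace.proj (2:Fin 3) A = a := by rw [hA]; rfl
  have e0B : EuclideanSpace.proj (0:Fin 3) B = 0 := by rw [hB]; rfl
  have e1B : EuclideanSpace.proj (1:Fin 3) B = 10 * sin t := by rw [hB]; rfl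
  have e2B : EuclideanSpace.proj (2:Fin 3) B = s := by rw [hB]; rfl
  have e0D : EuclideanSpace.proj (0:Fin 3) D = 0 := by rw [hD]; rfl
  have e1D : EuclideanSpace.proj (1:Fin 3) D = -(10 * sin t) := by rw [hD]; rfl
  have e2D : EuclideanSpace.proj (2:Fin 3) D = s := by rw [hD]; rfl
  have e0E : EuclideanSpace.proj (0:Fin 3) E = 12 := by rw [hE]; rfl
  have e1E : EuclideanSpace.proj (1:Fin 3) E = 0 := by rw [hE]; rfl
  have e2E : EuclideanSpace.proj (2:Fin 3) E = 0 := by rw [hE]; rfl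
  have e0F : EuclideanSpace.proj (0:Fin 3) F = -12 := by rw [hF]; rfl
  have e1F : EuclideanSpace.proj (1:Fin 3) F = 0 := by rw [hF]; rfl
  have e2F : EuclideanSpace.proj (2:Fin 3) F = 0 := by rw [hF]; rfl
  intro X hX
  simp only [Set.mem_insert_iff, Set.mem_singleton_iff] at hX
  rcases hX with rfl | rfl | rfl | rfl | rfl
  · -- X = A, use z-coordinate
    refine exposed_extreme (by simp) (EuclideanSpace.proj (2:Fin 3)) ?_
    intro y hy hne
    simp only [Set.mem_insert_iff, Set.mem_singleton_iff] at hy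
    rcases hy with rfl | rfl | rfl | rfl | rfl
    · exact absurd rfl hne
    · rw [e2B, e2A]; linarith
    · rw [e2D, e2A]; linarith
    · rw [e2E, e2A]; linarith
    · rw [e2F, e2A]; linarith
  · -- X = B, use y-coordinate
    refine exposed_extreme (by simp) (EuclideanSpace.proj (1:Fin 3)) ?_
    intro y hy hne
    simp only [Set.mem_insert_iff, Set.mem_singleton_iff] at hy
    rcases hy with rfl | rfl | rfl | rfl | rfl
    · rw [e1A, e1B]; linarith
    · exact absurd rfl hne
    · rw [e1D, e1B]; linarith
    · rw [e1E, e1B]; linarith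
    · rw [e1F, e1B]; linarith
  · -- X = D, use -y-coordinate
    refine exposed_extreme (by simp) (-(EuclideanSpace.proj (1:Fin 3))) ?_
    intro y hy hne
    simp only [Set.mem_insert_iff, Set.mem_singleton_iff] at hy
    simp only [ContinuousLinearMap.neg_apply]
    rcases hy with rfl | rfl | rfl | rfl | rfl
    · rw [e1A, e1D]; linarith
    · rw [e1B, e1D]; linarith
    · exact absurd rfl hne
    · rw [e1E, e1D]; linarith
    · rw [e1F, e1D]; linarith
  · -- X = E, use x-coordinate
    refine exposed_extreme (by simp) (EuclideanSpace.proj (0:Fin 3)) ?_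
    intro y hy hne
    simp only [Set.mem_insert_iff, Set.mem_singleton_iff] at hy
    rcases hy with rfl | rfl | rfl | rfl | rfl
    · rw [e0A, e0E]; linarith
    · rw [e0B, e0E]; linarith
    · rw [e0D, e0E]; linarith
    · exact absurd rfl hne
    · rw [e0F, e0E]; linarith
  · -- X = F, use -x-coordinate
    refine exposed_extreme (by simp) (-(EuclideanSpace.proj (0:Fin 3))) ?_
    intro y hy hne
    simp only [Set.mem_insert_iff, Set.mem_singleton_iff] at hy
    simp only [ContinuousLinearMap.neg_apply]
    rcases hy with rfl | rfl | rfl | rfl | rfl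
    · rw [e0A, e0F]; linarith
    · rw [e0B, e0F]; linarith
    · rw [e0D, e0F]; linarith
    · rw [e0E, e0F]; linarith
    · exact absurd rfl hne
end

section
/- Let x be a real number with 12 − 5·√3 < x < 12 + 5·√3, and set e₁ = (219 − x²)/(10·√3) and e₂ = √(438·x² − x⁴ − 4761)/(10·√3). In Euclidean 3-space define the points A' = (5·√3, 0, 0), B' = (0, 5, 0), D' = (0, −5, 0), E' = (e₁, 0, e₂), F' = (e₁, 0, −e₂), and C' = (0,0,0) (so C' is the midpoint of the segment B'D'). Then e₂ > 0 and: dist(A',B') = dist(A',D') = dist(B',D') = 10; dist(B',E') = dist(B',F') = dist(D',E') = dist(D',F') = 13; dist(A',E') = dist(A',F') = x; dist(A',C') = 5·√3; dist(B',C') = dist(D',C') = 5; and dist(C',E') = dist(C',F') = 12. -/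
open Real

lemma dist_pt_s15 (a b c a' b' c' : ℝ) :
    dist (pt a b c) (pt a' b' c') = Real.sqrt ((a-a')^2+(b-b')^2+(c-c')^2) := by
  rw [EuclideanSpace.dist_eq]
  simp [pt, Fin.sum_univ_three, Real.dist_eq, sq_abs]

set_option maxHeartbeats 8000000 in
theorem stmt_15 (x : ℝ)
    (hx1 : 12 - 5 * Real.sqrt 3 < x) (hx2 : x < 12 + 5 * Real.sqrt 3)
    (e₁ e₂ : ℝ)
    (he₁ : e₁ = (219 - x ^ 2) / (10 * Real.sqrt 3))
    (he₂ : e₂ = Real.sqrt (438 * x ^ 2 - x ^ 4 - 4761) / (10 * Real.sqrt 3))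
    (A' B' D' E' F' C' : EuclideanSpace ℝ (Fin 3))
    (hA' : A' = pt (5 * Real.sqrt 3) 0 0)
    (hB' : B' = pt 0 5 0) (hD' : D' = pt 0 (-5) 0)
    (hE' : E' = pt e₁ 0 e₂) (hF' : F' = pt e₁ 0 (-e₂)) (hC' : C' = pt 0 0 0) :
    C' = midpoint ℝ B' D' ∧ e₂ > 0 ∧
    dist A' B' = 10 ∧ dist A' D' = 10 ∧ dist B' D' = 10 ∧
    dist B' E' = 13 ∧ dist B' F' = 13 ∧ dist D' E' = 13 ∧ dist D' F' = 13 ∧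
    dist A' E' = x ∧ dist A' F' = x ∧
    dist A' C' = 5 * Real.sqrt 3 ∧ dist B' C' = 5 ∧ dist D' C' = 5 ∧
    dist C' E' = 12 ∧ dist C' F' = 12 := by
  have hs : Real.sqrt 3 ^ 2 = 3 := Real.sq_sqrt (by norm_num)
  have hsp : (0:ℝ) < Real.sqrt 3 := Real.sqrt_pos.2 (by norm_num)
  have hs2 : Real.sqrt 3 < 2 := by nlinarith
  have hxp : 0 < x := by nlinarith
  have hSpos : 0 < 438 * x ^ 2 - x ^ 4 - 4761 := by
    nlinarith [mul_pos (sub_pos.2 hx1) (sub_pos.2 hx2), sq_nonneg (x - 12), sq_nonneg x]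
  have hS : 0 ≤ 438 * x ^ 2 - x ^ 4 - 4761 := le_of_lt hSpos
  have he₂pos : 0 < e₂ := by
    rw [he₂]
    exact div_pos (Real.sqrt_pos.2 hSpos) (by positivity)
  have he₂sq : e₂ ^ 2 = (438 * x ^ 2 - x ^ 4 - 4761) / 300 := by
    rw [he₂, div_pow, Real.sq_sqrt hS, mul_pow, hs]; norm_num
  have he₁sq : e₁ ^ 2 = (219 - x ^ 2) ^ 2 / 300 := by
    rw [he₁, div_pow, mul_pow, hs]; norm_num
  have hse : Real.sqrt 3 * e₁ = (219 - x ^ 2) / 10 := by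
    rw [he₁]; field_simp
  refine ⟨?_, he₂pos, ?_, ?_, ?_, ?_, ?_, ?_, ?_, ?_, ?_, ?_, ?_, ?_, ?_, ?_⟩
  · rw [hB', hD', hC', midpoint_eq_smul_add]
    apply PiLp.ext
    intro i
    fin_cases i <;> simp [pt] <;> norm_num
  · rw [hA', hB', dist_pt_s15]
    rw [show (5*Real.sqrt 3 - 0)^2 + (0-5)^2 + (0-0)^2 = 10^2 by linear_combination 25 * hs]
    exact Real.sqrt_sq (by norm_num)
  · rw [hA', hD', dist_pt_s15]
    rw [show (5*Real.sqrt 3 - 0)^2 + (0-(-5))^2 + (0-0)^2 = 10^2 by linear_combination 25 * hs]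
    exact Real.sqrt_sq (by norm_num)
  · rw [hB', hD', dist_pt_s15]
    rw [show ((0:ℝ) - 0)^2 + (5-(-5))^2 + (0-0)^2 = 10^2 by norm_num]
    exact Real.sqrt_sq (by norm_num)
  · rw [hB', hE', dist_pt_s15]
    rw [show (0 - e₁)^2 + (5-0)^2 + (0-e₂)^2 = 13^2 by linear_combination he₁sq + he₂sq]
    exact Real.sqrt_sq (by norm_num)
  · rw [hB', hF', dist_pt_s15]
    rw [show (0 - e₁)^2 + (5-0)^2 + (0-(-e₂))^2 = 13^2 by linear_combination he₁sq + he₂sq]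
    exact Real.sqrt_sq (by norm_num)
  · rw [hD', hE', dist_pt_s15]
    rw [show (0 - e₁)^2 + ((-5)-0)^2 + (0-e₂)^2 = 13^2 by linear_combination he₁sq + he₂sq]
    exact Real.sqrt_sq (by norm_num)
  · rw [hD', hF', dist_pt_s15]
    rw [show (0 - e₁)^2 + ((-5)-0)^2 + (0-(-e₂))^2 = 13^2 by linear_combination he₁sq + he₂sq]
    exact Real.sqrt_sq (by norm_num)
  · rw [hA', hE', dist_pt_s15]
    rw [show (5*Real.sqrt 3 - e₁)^2 + (0-0)^2 + (0-e₂)^2 = x^2 by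
      linear_combination he₁sq + he₂sq - 10 * hse + 25 * hs]
    exact Real.sqrt_sq hxp.le
  · rw [hA', hF', dist_pt_s15]
    rw [show (5*Real.sqrt 3 - e₁)^2 + (0-0)^2 + (0-(-e₂))^2 = x^2 by
      linear_combination he₁sq + he₂sq - 10 * hse + 25 * hs]
    exact Real.sqrt_sq hxp.le
  · rw [hA', hC', dist_pt_s15]
    rw [show (5*Real.sqrt 3 - 0)^2 + ((0:ℝ)-0)^2 + ((0:ℝ)-0)^2 = (5*Real.sqrt 3)^2 by ring]
    exact Real.sqrt_sq (by positivity)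
  · rw [hB', hC', dist_pt_s15]
    rw [show ((0:ℝ) - 0)^2 + ((5:ℝ)-0)^2 + ((0:ℝ)-0)^2 = 5^2 by norm_num]
    exact Real.sqrt_sq (by norm_num)
  · rw [hD', hC', dist_pt_s15]
    rw [show ((0:ℝ) - 0)^2 + ((-5:ℝ)-0)^2 + ((0:ℝ)-0)^2 = 5^2 by norm_num]
    exact Real.sqrt_sq (by norm_num)
  · rw [hC', hE', dist_pt_s15]
    rw [show (0 - e₁)^2 + ((0:ℝ)-0)^2 + (0-e₂)^2 = 12^2 by linear_combination he₁sq + he₂sq]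
    exact Real.sqrt_sq (by norm_num)
  · rw [hC', hF', dist_pt_s15]
    rw [show (0 - e₁)^2 + ((0:ℝ)-0)^2 + (0-(-e₂))^2 = 12^2 by linear_combination he₁sq + he₂sq]
    exact Real.sqrt_sq (by norm_num)
end

section
/- Let x be a real number with 12 − 5·√3 < x < 12 + 5·√3, and set e₁ = (219 − x²)/(10·√3) and e₂ = √(438·x² − x⁴ − 4761)/(10·√3). In Euclidean 3-space let A' = (5·√3, 0, 0), B' = (0, 5, 0), D' = (0, −5, 0), E' = (e₁, 0, e₂), F' = (e₁, 0, −e₂). Then the Lebesgue volume of the union of the convex hull of {A', B', D', E'} and the convex hull of {A', B', D', F'} equals (5/3)·√(438·x² − x⁴ − 4761). -/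
open Real

open Set MeasureTheory

/-! ### Corner simplex -/

def corner : Set (Fin 3 → ℝ) := {x | (∀ i, 0 ≤ x i) ∧ ∑ i, x i ≤ 1}

lemma corner_convex : Convex ℝ corner := by
  rintro x ⟨hx1, hx2⟩ y ⟨hy1, hy2⟩ a b ha hb hab
  refine ⟨fun i => ?_, ?_⟩
  · have := hx1 i; have := hy1 i
    simp only [Pi.add_apply, Pi.smul_apply, smul_eq_mul]
    nlinarith
  · simp only [Pi.add_apply, Pi.smul_apply, smul_eq_mul, Finset.sum_add_distrib, ← Finset.mul_sum]
    nlinarith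

lemma hull_corner :
    convexHull ℝ (insert (0 : Fin 3 → ℝ) (Set.range fun i => Pi.single i (1 : ℝ))) = corner := by
  have hstd : convexHull ℝ (Set.range fun i : Fin 3 => Pi.single i (1:ℝ))
      = stdSimplex ℝ (Fin 3) := by
    have hrange : (Set.range fun i : Fin 3 => Pi.single i (1:ℝ))
        = Set.range (fun i j : Fin 3 => @ite ℝ (i = j) (Classical.propDecidable _) 1 0) := by
      apply congrArg Set.range
      funext i j
      rw [Pi.single_apply]
      by_cases h : i = j <;> simp [h, eq_comm]
    rw [hrange]; convert convexHull_basis_eq_stdSimplex ℝ (Fin 3)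
  apply Subset.antisymm
  · apply convexHull_min _ corner_convex
    rintro y (rfl | ⟨i, rfl⟩)
    · exact ⟨fun i => le_rfl, by simp⟩
    · refine ⟨fun j => by simp only [Pi.single_apply]; positivity, ?_⟩
      simp [Finset.sum_pi_single']
  · intro x hx
    obtain ⟨h0, h1⟩ := hx
    set s := ∑ i, x i with hs
    have hs0 : 0 ≤ s := Finset.sum_nonneg fun i _ => h0 i
    rcases eq_or_lt_of_le hs0 with h | h
    · have hx0 : x = 0 := by
        funext i
        have := (Finset.sum_eq_zero_iff_of_nonneg (fun j _ => h0 j)).1 h.symm i (Finset.mem_univ i)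
        simpa using this
      rw [hx0]; exact subset_convexHull ℝ _ (mem_insert _ _)
    · have hy : s⁻¹ • x ∈ stdSimplex ℝ (Fin 3) := by
        refine ⟨fun i => ?_, ?_⟩
        · simpa using mul_nonneg (inv_nonneg.2 hs0) (h0 i)
        · simp only [Pi.smul_apply, smul_eq_mul, ← Finset.mul_sum]
          exact inv_mul_cancel₀ (ne_of_gt h)
      have hy' : s⁻¹ • x ∈ convexHull ℝ
          (insert (0 : Fin 3 → ℝ) (Set.range fun i => Pi.single i (1:ℝ))) := by
        apply convexHull_mono (subset_insert _ _)
        rw [hstd]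
        exact hy
      have h0m : (0 : Fin 3 → ℝ) ∈ convexHull ℝ
          (insert (0 : Fin 3 → ℝ) (Set.range fun i => Pi.single i (1:ℝ))) :=
        subset_convexHull ℝ _ (mem_insert _ _)
      have := (convex_convexHull ℝ _) h0m hy' (by linarith : (0:ℝ) ≤ 1 - s) hs0
        (by ring)
      simpa [smul_smul, mul_inv_cancel₀ (ne_of_gt h)] using this

/-! ### Volume computations in product spaces -/

def T2 (t : ℝ) : Set (ℝ × ℝ) := {p | 0 ≤ p.1 ∧ 0 ≤ p.2 ∧ p.1 + p.2 ≤ t}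

lemma measurableSet_T2 (t : ℝ) : MeasurableSet (T2 t) := by
  apply MeasurableSet.inter (measurableSet_le measurable_const measurable_fst)
  exact MeasurableSet.inter (measurableSet_le measurable_const measurable_snd)
    (measurableSet_le (measurable_fst.add measurable_snd) measurable_const)

lemma T2_empty {t : ℝ} (ht : t < 0) : T2 t = ∅ := by
  ext p; simp only [T2, mem_setOf_eq, mem_empty_iff_false, iff_false]
  rintro ⟨h1, h2, h3⟩; linarith

lemma vol_T2 {t : ℝ} (ht : 0 ≤ t) : volume (T2 t) = ENNReal.ofReal (t ^ 2 / 2) := by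
  rw [Measure.volume_eq_prod, Measure.prod_apply (measurableSet_T2 t)]
  have h1 : ∀ a : ℝ, volume (Prod.mk a ⁻¹' T2 t)
      = Set.indicator (Ici (0:ℝ)) (fun a => ENNReal.ofReal (t - a)) a := by
    intro a
    by_cases ha : 0 ≤ a
    · have he : Prod.mk a ⁻¹' T2 t = Icc 0 (t - a) := by
        ext b
        simp only [T2, mem_preimage, mem_setOf_eq, mem_Icc, ha, true_and]
        constructor
        · rintro ⟨hb1, hb2⟩; exact ⟨hb1, by linarith⟩
        · rintro ⟨hb1, hb2⟩; exact ⟨hb1, by linarith⟩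
      rw [he, Real.volume_Icc, Set.indicator_of_mem (Set.mem_Ici.2 ha), sub_zero]
    · have he : Prod.mk a ⁻¹' T2 t = ∅ := by
        ext b
        simp only [T2, mem_preimage, mem_setOf_eq, mem_empty_iff_false, iff_false]
        rintro ⟨hb1, _⟩; exact ha hb1
      rw [he, measure_empty, Set.indicator_of_notMem (fun h => ha (Set.mem_Ici.1 h))]
  simp_rw [h1]
  rw [lintegral_indicator measurableSet_Ici _, ← Icc_union_Ioi_eq_Ici ht,
    lintegral_union measurableSet_Ioi (by
      rw [Set.disjoint_left]
      rintro a ⟨_, h1⟩ h2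
      exact absurd h1 (not_le.2 h2))]
  have h2 : ∫⁻ a in Ioi t, ENNReal.ofReal (t - a) = 0 := by
    rw [setLIntegral_congr_fun measurableSet_Ioi
      (fun a (ha : t < a) => by
        rw [ENNReal.ofReal_eq_zero]; linarith), lintegral_zero]
  rw [h2, add_zero, ← ofReal_integral_eq_lintegral_ofReal (f := fun a : ℝ => t - a)
      ((continuous_const.sub continuous_id').integrableOn_Icc)
      ((ae_restrict_mem measurableSet_Icc).mono fun a ha => by
        simp only [Pi.zero_apply]; linarith [ha.2])]
  congr 1
  rw [integral_Icc_eq_integral_Ioc, ← intervalIntegral.integral_of_le ht,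
    intervalIntegral.integral_sub (intervalIntegrable_const) intervalIntegral.intervalIntegrable_id,
    intervalIntegral.integral_const, integral_id]
  simp; ring

def S3 : Set (ℝ × ℝ × ℝ) :=
  {p | 0 ≤ p.1 ∧ 0 ≤ p.2.1 ∧ 0 ≤ p.2.2 ∧ p.1 + p.2.1 + p.2.2 ≤ 1}

lemma measurableSet_S3 : MeasurableSet S3 := by
  apply MeasurableSet.inter (measurableSet_le measurable_const measurable_fst)
  apply MeasurableSet.inter (measurableSet_le measurable_const (measurable_fst.comp measurable_snd))
  exact MeasurableSet.inter
    (measurableSet_le measurable_const (measurable_snd.comp measurable_snd))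
    (measurableSet_le ((measurable_fst.add (measurable_fst.comp measurable_snd)).add
      (measurable_snd.comp measurable_snd)) measurable_const)

lemma vol_S3 : volume S3 = ENNReal.ofReal (1 / 6) := by
  rw [Measure.volume_eq_prod, Measure.prod_apply measurableSet_S3]
  have h1 : ∀ a : ℝ, volume (Prod.mk a ⁻¹' S3)
      = Set.indicator (Ici (0:ℝ)) (fun a => volume (T2 (1 - a))) a := by
    intro a
    by_cases ha : 0 ≤ a
    · have he : Prod.mk a ⁻¹' S3 = T2 (1 - a) := by
        ext p
        simp only [S3, T2, mem_preimage, mem_setOf_eq, ha, true_and]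
        constructor
        · rintro ⟨hb1, hb2, hb3⟩; exact ⟨hb1, hb2, by linarith⟩
        · rintro ⟨hb1, hb2, hb3⟩; exact ⟨hb1, hb2, by linarith⟩
      rw [he, Set.indicator_of_mem (Set.mem_Ici.2 ha)]
    · have he : Prod.mk a ⁻¹' S3 = ∅ := by
        ext p
        simp only [S3, mem_preimage, mem_setOf_eq, mem_empty_iff_false, iff_false]
        rintro ⟨hb1, _⟩; exact ha hb1
      rw [he, measure_empty, Set.indicator_of_notMem (fun h => ha (Set.mem_Ici.1 h))]
  simp_rw [h1]
  rw [lintegral_indicator measurableSet_Ici _, ← Icc_union_Ioi_eq_Ici (zero_le_one' ℝ),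
    lintegral_union measurableSet_Ioi (by
      rw [Set.disjoint_left]
      rintro a ⟨_, h1⟩ h2
      exact absurd h1 (not_le.2 h2))]
  have h2 : ∫⁻ a in Ioi (1:ℝ), volume (T2 (1 - a)) = 0 := by
    rw [setLIntegral_congr_fun measurableSet_Ioi
      (fun a (ha : 1 < a) => by
        rw [T2_empty (by linarith), measure_empty]), lintegral_zero]
  rw [h2, add_zero,
    setLIntegral_congr_fun measurableSet_Icc
      (fun a (ha : a ∈ Icc (0:ℝ) 1) => vol_T2 (by linarith [ha.2])),
    ← ofReal_integral_eq_lintegral_ofReal (f := fun a : ℝ => (1 - a) ^ 2 / 2)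
      (Continuous.integrableOn_Icc (by fun_prop))
      ((ae_restrict_mem measurableSet_Icc).mono fun a _ => by
        simp only [Pi.zero_apply]; positivity)]
  congr 1
  rw [integral_Icc_eq_integral_Ioc, ← intervalIntegral.integral_of_le (zero_le_one' ℝ)]
  have hc : ∫ a in (0:ℝ)..1, (1 - a) ^ 2 / 2 = ∫ a in (0:ℝ)..1, a ^ 2 / 2 := by
    have := intervalIntegral.integral_comp_sub_left (a := (0:ℝ)) (b := 1)
      (fun u : ℝ => u ^ 2 / 2) 1
    simpa using this
  rw [hc, intervalIntegral.integral_div, integral_pow]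
  norm_num

lemma vol_corner : volume corner = ENNReal.ofReal (1 / 6) := by
  have mp1 := MeasureTheory.volume_preserving_piFinSuccAbove (fun _ : Fin 3 => ℝ) 0
  have mp2 := MeasurePreserving.prod (MeasurePreserving.id (volume : Measure ℝ))
    (volume_preserving_finTwoArrow ℝ)
  rw [← Measure.volume_eq_prod, ← Measure.volume_eq_prod] at mp2
  have hmeas2 : MeasurableSet (Prod.map (id : ℝ → ℝ) MeasurableEquiv.finTwoArrow ⁻¹' S3) :=
    measurableSet_S3.preimage (measurable_id.prodMap (MeasurableEquiv.finTwoArrow).measurable)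
  have hset : corner = (MeasurableEquiv.piFinSuccAbove (fun _ : Fin 3 => ℝ) 0) ⁻¹'
      (Prod.map (id : ℝ → ℝ) MeasurableEquiv.finTwoArrow ⁻¹' S3) := by
    ext x
    have happ : (MeasurableEquiv.piFinSuccAbove (fun _ : Fin 3 => ℝ) 0) x
        = (x 0, fun j : Fin 2 => x j.succ) := rfl
    simp only [corner, mem_setOf_eq, mem_preimage, happ, Prod.map, id_eq,
      MeasurableEquiv.finTwoArrow, MeasurableEquiv.piFinTwo_apply]
    constructor
    · rintro ⟨h0, h1⟩
      refine ⟨h0 0, h0 1, h0 2, ?_⟩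
      rwa [Fin.sum_univ_three] at h1
    · rintro ⟨h0, h1, h2, h3⟩
      refine ⟨fun i => ?_, by rwa [Fin.sum_univ_three]⟩
      fin_cases i <;> assumption
  rw [hset, mp1.measure_preimage (hmeas2.nullMeasurableSet),
    mp2.measure_preimage measurableSet_S3.nullMeasurableSet]
  exact vol_S3

/-! ### Tetrahedron volume -/

lemma range_fin3 {α : Type*} (v : Fin 3 → α) : Set.range v = {v 0, v 1, v 2} := by
  ext y; constructor
  · rintro ⟨i, rfl⟩; fin_cases i <;> simp
  · rintro (rfl | rfl | rfl)
    exacts [⟨0, rfl⟩, ⟨1, rfl⟩, ⟨2, rfl⟩]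

lemma vol_tet (p u v w : Fin 3 → ℝ) :
    volume (convexHull ℝ {p, p + u, p + v, p + w})
      = ENNReal.ofReal |(Matrix.of ![u, v, w]).det| * ENNReal.ofReal (1 / 6) := by
  set M : (Fin 3 → ℝ) →ₗ[ℝ] (Fin 3 → ℝ) := Matrix.toLin' (Matrix.of ![u, v, w]).transpose with hMdef
  have hM : ∀ i : Fin 3, M (Pi.single i 1) = ![u, v, w] i := by
    intro i
    fin_cases i <;> funext j <;>
      simp [hMdef, Matrix.toLin'_apply, Matrix.mulVec_single, Matrix.transpose_apply,
        Matrix.transpose, Matrix.vecHead, Matrix.vecTail]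
  have h2 : ({0, u, v, w} : Set (Fin 3 → ℝ))
      = M '' (insert 0 (Set.range fun i => Pi.single i (1:ℝ))) := by
    rw [Set.image_insert_eq, map_zero, ← Set.range_comp]
    have : (M ∘ fun i => Pi.single i (1:ℝ)) = ![u, v, w] := funext fun i => hM i
    rw [this, range_fin3]
    simp [Matrix.cons_val_zero, Matrix.cons_val_one]
  have h0 : ({p, p + u, p + v, p + w} : Set (Fin 3 → ℝ))
      = (fun x => p + x) '' {0, u, v, w} := by
    simp only [Set.image_insert_eq, Set.image_singleton, add_zero]
  have htrans : convexHull ℝ ((fun x : Fin 3 → ℝ => p + x) '' {0, u, v, w})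
      = (fun x : Fin 3 → ℝ => p + x) '' convexHull ℝ {0, u, v, w} :=
    ((AffineEquiv.constVAdd ℝ (Fin 3 → ℝ) p).toAffineMap.image_convexHull _).symm
  have himg : ∀ s : Set (Fin 3 → ℝ), (fun x => p + x) '' s = (fun x => -p + x) ⁻¹' s := by
    intro s; ext y
    simp only [mem_image, mem_preimage]
    constructor
    · rintro ⟨x, hx, rfl⟩; simpa using hx
    · intro hy; exact ⟨-p + y, hy, by abel⟩
  rw [h0, htrans, himg, measure_preimage_add, h2, ← LinearMap.image_convexHull, hull_corner,
    Measure.addHaar_image_linearMap, vol_corner, hMdef, LinearMap.det_toLin',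
    Matrix.det_transpose]

lemma halfspace_convex (c : ℝ) : Convex ℝ {x : Fin 3 → ℝ | c * x 2 ≤ 0} := by
  intro x hx y hy a b ha hb hab
  simp only [mem_setOf_eq, Pi.add_apply, Pi.smul_apply, smul_eq_mul] at *
  nlinarith

/-! ### Main theorem -/

theorem stmt_16 (x : ℝ)
    (hx1 : 12 - 5 * Real.sqrt 3 < x) (hx2 : x < 12 + 5 * Real.sqrt 3)
    (e₁ e₂ : ℝ)
    (he₁ : e₁ = (219 - x ^ 2) / (10 * Real.sqrt 3))
    (he₂ : e₂ = Real.sqrt (438 * x ^ 2 - x ^ 4 - 4761) / (10 * Real.sqrt 3))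
    (A' B' D' E' F' : EuclideanSpace ℝ (Fin 3))
    (hA' : A' = pt (5 * Real.sqrt 3) 0 0)
    (hB' : B' = pt 0 5 0) (hD' : D' = pt 0 (-5) 0)
    (hE' : E' = pt e₁ 0 e₂) (hF' : F' = pt e₁ 0 (-e₂)) :
    MeasureTheory.volume
        (convexHull ℝ ({A', B', D', E'} : Set (EuclideanSpace ℝ (Fin 3))) ∪
         convexHull ℝ ({A', B', D', F'} : Set (EuclideanSpace ℝ (Fin 3))))
      = ENNReal.ofReal ((5 / 3) * Real.sqrt (438 * x ^ 2 - x ^ 4 - 4761)) := by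
  subst hA' hB' hD' hE' hF'
  -- pass to the pi space
  set sq : ℝ := Real.sqrt (438 * x ^ 2 - x ^ 4 - 4761) with hsq
  have hsq0 : 0 ≤ sq := Real.sqrt_nonneg _
  have h3 : (0:ℝ) < Real.sqrt 3 := Real.sqrt_pos.2 (by norm_num)
  have he₂0 : 0 ≤ e₂ := by rw [he₂]; positivity
  set a : Fin 3 → ℝ := ![5 * Real.sqrt 3, 0, 0] with ha
  set b : Fin 3 → ℝ := ![0, 5, 0] with hb
  set d : Fin 3 → ℝ := ![0, -5, 0] with hd
  set e : Fin 3 → ℝ := ![e₁, 0, e₂] with he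
  set f : Fin 3 → ℝ := ![e₁, 0, -e₂] with hf
  set T : Set (Fin 3 → ℝ) := convexHull ℝ {a, b, d, e} ∪ convexHull ℝ {a, b, d, f} with hT
  have hTmeas : MeasurableSet T := by
    have h1 : IsCompact (convexHull ℝ ({a, b, d, e} : Set (Fin 3 → ℝ))) :=
      (Set.toFinite _).isCompact_convexHull ℝ
    have h2 : IsCompact (convexHull ℝ ({a, b, d, f} : Set (Fin 3 → ℝ))) :=
      (Set.toFinite _).isCompact_convexHull ℝ
    exact (h1.isClosed.measurableSet).union h2.isClosed.measurableSet
  have hpre : (convexHull ℝ ({pt (5 * Real.sqrt 3) 0 0, pt 0 5 0, pt 0 (-5) 0, pt e₁ 0 e₂} :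
        Set (EuclideanSpace ℝ (Fin 3))) ∪
      convexHull ℝ ({pt (5 * Real.sqrt 3) 0 0, pt 0 5 0, pt 0 (-5) 0, pt e₁ 0 (-e₂)} :
        Set (EuclideanSpace ℝ (Fin 3))))
      = (MeasurableEquiv.toLp 2 (Fin 3 → ℝ)).symm ⁻¹' T := by
    have key : ∀ s : Set (Fin 3 → ℝ), (MeasurableEquiv.toLp 2 (Fin 3 → ℝ)).symm ⁻¹' convexHull ℝ s
        = convexHull ℝ ((WithLp.linearEquiv 2 ℝ (Fin 3 → ℝ)).symm.toLinearMap '' s) := by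
      intro s
      rw [← LinearMap.image_convexHull]
      ext y
      simp only [Set.mem_preimage, Set.mem_image, LinearEquiv.coe_coe]
      constructor
      · intro h; exact ⟨_, h, by simp⟩
      · rintro ⟨z, hz, rfl⟩; simpa using hz
    rw [hT, Set.preimage_union, key, key]
    simp [Set.image_insert_eq, pt, ha, hb, hd, he, hf]
  rw [hpre, (EuclideanSpace.volume_preserving_symm_measurableEquiv_toLp (Fin 3)).measure_preimage
    hTmeas.nullMeasurableSet]
  -- volumes of the two tetrahedra
  have hdet1 : (Matrix.of ![b - a, d - a, e - a]).det = 50 * Real.sqrt 3 * e₂ := by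
    simp [Matrix.det_fin_three, ha, hb, hd, he]
    ring
  have hdet2 : (Matrix.of ![b - a, d - a, f - a]).det = -(50 * Real.sqrt 3 * e₂) := by
    simp [Matrix.det_fin_three, ha, hb, hd, hf]
    ring
  have hvol1 : volume (convexHull ℝ ({a, b, d, e} : Set (Fin 3 → ℝ)))
      = ENNReal.ofReal (50 * Real.sqrt 3 * e₂ / 6) := by
    have := vol_tet a (b - a) (d - a) (e - a)
    simp only [add_sub_cancel] at this
    rw [this, hdet1, abs_of_nonneg (by positivity), ← ENNReal.ofReal_mul (by positivity)]
    ring_nf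
  have hvol2 : volume (convexHull ℝ ({a, b, d, f} : Set (Fin 3 → ℝ)))
      = ENNReal.ofReal (50 * Real.sqrt 3 * e₂ / 6) := by
    have := vol_tet a (b - a) (d - a) (f - a)
    simp only [add_sub_cancel] at this
    rw [this, hdet2, abs_neg, abs_of_nonneg (by positivity),
      ← ENNReal.ofReal_mul (by positivity)]
    ring_nf
  -- a.e. disjointness
  have hsub1 : convexHull ℝ ({a, b, d, e} : Set (Fin 3 → ℝ)) ⊆ {y | (-1) * y 2 ≤ 0} := by
    apply convexHull_min _ (halfspace_convex (-1))
    rintro y (rfl | rfl | rfl | rfl) <;>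
      simp only [mem_setOf_eq, ha, hb, hd, he] <;> norm_num [he₂0, Matrix.cons_val_two, Matrix.tail_cons, Matrix.head_cons]
  have hsub2 : convexHull ℝ ({a, b, d, f} : Set (Fin 3 → ℝ)) ⊆ {y | (1:ℝ) * y 2 ≤ 0} := by
    apply convexHull_min _ (halfspace_convex 1)
    rintro y (rfl | rfl | rfl | rfl) <;>
      simp only [mem_setOf_eq, ha, hb, hd, hf] <;> norm_num [he₂0, Matrix.cons_val_two, Matrix.tail_cons, Matrix.head_cons]
  have hplane : volume {y : Fin 3 → ℝ | y 2 = 0} = 0 := by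
    have : {y : Fin 3 → ℝ | y 2 = 0}
        = Set.pi Set.univ (fun i : Fin 3 => if i = 2 then ({0} : Set ℝ) else Set.univ) := by
      ext y
      simp only [mem_setOf_eq, Set.mem_pi, Set.mem_univ, forall_true_left]
      constructor
      · intro h i; fin_cases i <;> simp [h]
      · intro h; have := h 2; simpa using this
    rw [this, volume_pi_pi]
    rw [Fin.prod_univ_three]
    simp [Real.volume_singleton]
  have hdisj : volume (convexHull ℝ ({a, b, d, e} : Set (Fin 3 → ℝ))
      ∩ convexHull ℝ ({a, b, d, f} : Set (Fin 3 → ℝ))) = 0 := by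
    apply measure_mono_null _ hplane
    intro y ⟨hy1, hy2⟩
    have h1 := hsub1 hy1
    have h2 := hsub2 hy2
    simp only [mem_setOf_eq] at *
    linarith
  have hT2meas : NullMeasurableSet (convexHull ℝ ({a, b, d, f} : Set (Fin 3 → ℝ))) volume :=
    (((Set.toFinite _).isCompact_convexHull ℝ).isClosed.measurableSet).nullMeasurableSet
  rw [hT, measure_union₀ hT2meas hdisj, hvol1, hvol2,
    ← ENNReal.ofReal_add (by positivity) (by positivity)]
  congr 1
  rw [he₂]
  field_simp
  ring
end

section
/- Let x be a real number with √219 < x < 12 + 5·√3, and set e₁ = (219 − x²)/(10·√3) and e₂ = √(438·x² − x⁴ − 4761)/(10·√3). In Euclidean 3-space let A' = (5·√3, 0, 0), B' = (0, 5, 0), D' = (0, −5, 0), E' = (e₁, 0, e₂), F' = (e₁, 0, −e₂). Then the union of the convex hull of {A', B', D', E'} and the convex hull of {A', B', D', F'} is not a convex set. (In fact, the midpoint (e₁, 0, 0) of the segment E'F' does not belong to the union, since e₁ < 0.) -/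
open Real

@[simp] lemma pt_apply (x y z : ℝ) (i : Fin 3) : pt x y z i = ![x, y, z] i := rfl

set_option maxHeartbeats 1000000 in
theorem stmt_17 (x : ℝ)
    (hx1 : Real.sqrt 219 < x) (hx2 : x < 12 + 5 * Real.sqrt 3)
    (e₁ e₂ : ℝ)
    (he₁ : e₁ = (219 - x ^ 2) / (10 * Real.sqrt 3))
    (he₂ : e₂ = Real.sqrt (438 * x ^ 2 - x ^ 4 - 4761) / (10 * Real.sqrt 3))
    (A' B' D' E' F' : EuclideanSpace ℝ (Fin 3))
    (hA' : A' = pt (5 * Real.sqrt 3) 0 0)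
    (hB' : B' = pt 0 5 0) (hD' : D' = pt 0 (-5) 0)
    (hE' : E' = pt e₁ 0 e₂) (hF' : F' = pt e₁ 0 (-e₂)) :
    ¬ Convex ℝ
        (convexHull ℝ ({A', B', D', E'} : Set (EuclideanSpace ℝ (Fin 3))) ∪
         convexHull ℝ ({A', B', D', F'} : Set (EuclideanSpace ℝ (Fin 3)))) ∧
    e₁ < 0 ∧
    midpoint ℝ E' F' ∉
        (convexHull ℝ ({A', B', D', E'} : Set (EuclideanSpace ℝ (Fin 3))) ∪
         convexHull ℝ ({A', B', D', F'} : Set (EuclideanSpace ℝ (Fin 3)))) := by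
  have h3 : (0:ℝ) < Real.sqrt 3 := Real.sqrt_pos.2 (by norm_num)
  have hs3 : Real.sqrt 3 ^ 2 = 3 := Real.sq_sqrt (by norm_num)
  have hx0 : 0 < x := lt_of_le_of_lt (Real.sqrt_nonneg 219) hx1
  have hxsq : 219 < x ^ 2 := (Real.sqrt_lt' hx0).1 hx1
  have he₁neg : e₁ < 0 := by
    rw [he₁]
    apply div_neg_of_neg_of_pos (by linarith) (by positivity)
  have hDpos : 0 < 438 * x ^ 2 - x ^ 4 - 4761 := by
    have hub : x ^ 2 < 219 + 120 * Real.sqrt 3 := by nlinarith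
    nlinarith [hxsq, hub, hs3]
  have he₂pos : 0 < e₂ := by
    rw [he₂]
    exact div_pos (Real.sqrt_pos.2 hDpos) (by positivity)
  -- midpoint
  have hmid : midpoint ℝ E' F' = pt e₁ 0 0 := by
    subst hE' hF'
    ext i
    rw [midpoint_eq_smul_add]
    fin_cases i <;> simp [pt] <;> ring
  -- linear functionals
  have hlin : ∀ c : ℝ, IsLinearMap ℝ (fun p : EuclideanSpace ℝ (Fin 3) => e₂ * p 0 + c * p 2) := by
    intro c
    constructor
    · intro p q
      simp only [PiLp.add_apply]
      ring
    · intro a p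
      simp only [PiLp.smul_apply, smul_eq_mul]
      ring
  have hsub1 : convexHull ℝ ({A', B', D', E'} : Set (EuclideanSpace ℝ (Fin 3))) ⊆
      {p | 0 ≤ e₂ * p 0 + (-e₁) * p 2} := by
    apply convexHull_min _ (convex_halfSpace_ge (hlin _) 0)
    intro p hp
    rcases hp with h | h | h | h <;> subst h
    · simp only [hA', Set.mem_setOf_eq, pt_apply, Matrix.cons_val_zero, Matrix.cons_val_two,
        Matrix.tail_cons, Matrix.head_cons]
      nlinarith [mul_nonneg h3.le he₂pos.le]
    · simp only [hB', Set.mem_setOf_eq, pt_apply, Matrix.cons_val_zero, Matrix.cons_val_two,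
        Matrix.tail_cons, Matrix.head_cons]
      nlinarith
    · simp only [hD', Set.mem_setOf_eq, pt_apply, Matrix.cons_val_zero, Matrix.cons_val_two,
        Matrix.tail_cons, Matrix.head_cons]
      nlinarith
    · simp only [hE', Set.mem_setOf_eq, pt_apply, Matrix.cons_val_zero, Matrix.cons_val_two,
        Matrix.tail_cons, Matrix.head_cons]
      nlinarith
  have hsub2 : convexHull ℝ ({A', B', D', F'} : Set (EuclideanSpace ℝ (Fin 3))) ⊆
      {p | 0 ≤ e₂ * p 0 + e₁ * p 2} := by
    apply convexHull_min _ (convex_halfSpace_ge (hlin _) 0)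
    intro p hp
    rcases hp with h | h | h | h <;> subst h
    · simp only [hA', Set.mem_setOf_eq, pt_apply, Matrix.cons_val_zero, Matrix.cons_val_two,
        Matrix.tail_cons, Matrix.head_cons]
      nlinarith [mul_nonneg h3.le he₂pos.le]
    · simp only [hB', Set.mem_setOf_eq, pt_apply, Matrix.cons_val_zero, Matrix.cons_val_two,
        Matrix.tail_cons, Matrix.head_cons]
      nlinarith
    · simp only [hD', Set.mem_setOf_eq, pt_apply, Matrix.cons_val_zero, Matrix.cons_val_two,
        Matrix.tail_cons, Matrix.head_cons]
      nlinarith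
    · simp only [hF', Set.mem_setOf_eq, pt_apply, Matrix.cons_val_zero, Matrix.cons_val_two,
        Matrix.tail_cons, Matrix.head_cons]
      nlinarith
  have hmid_notin : midpoint ℝ E' F' ∉
      (convexHull ℝ ({A', B', D', E'} : Set (EuclideanSpace ℝ (Fin 3))) ∪
       convexHull ℝ ({A', B', D', F'} : Set (EuclideanSpace ℝ (Fin 3)))) := by
    rw [hmid]
    rintro (h | h)
    · have := hsub1 h
      simp only [Set.mem_setOf_eq, pt_apply] at this
      simp only [Matrix.cons_val_zero, Matrix.cons_val_two, Matrix.tail_cons,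
        Matrix.head_cons] at this
      nlinarith [mul_neg_of_pos_of_neg he₂pos he₁neg]
    · have := hsub2 h
      simp only [Set.mem_setOf_eq, pt_apply] at this
      simp only [Matrix.cons_val_zero, Matrix.cons_val_two, Matrix.tail_cons,
        Matrix.head_cons] at this
      nlinarith [mul_neg_of_pos_of_neg he₂pos he₁neg]
  refine ⟨?_, he₁neg, hmid_notin⟩
  intro hconv
  apply hmid_notin
  have hE : E' ∈ (convexHull ℝ ({A', B', D', E'} : Set (EuclideanSpace ℝ (Fin 3))) ∪
      convexHull ℝ ({A', B', D', F'} : Set (EuclideanSpace ℝ (Fin 3)))) :=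
    Set.mem_union_left _ (subset_convexHull ℝ _ (by simp))
  have hF : F' ∈ (convexHull ℝ ({A', B', D', E'} : Set (EuclideanSpace ℝ (Fin 3))) ∪
      convexHull ℝ ({A', B', D', F'} : Set (EuclideanSpace ℝ (Fin 3)))) :=
    Set.mem_union_right _ (subset_convexHull ℝ _ (by simp))
  exact hconv.segment_subset hE hF (midpoint_mem_segment E' F')
end
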